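/- arXiv:2009.08298 — 8 statements merged into one kernel-verified Lean document; each statement's English description precedes it below -/
import Mathlib

section
/- Let A, B be subgroups of an abelian group M such that every automorphism of A + B fixing A ∩ B pointwise maps B into B. Then the restriction map induces a group isomorphism from Aut_A(A+B) to Aut_{A∩B}(B), where Aut_S(G) denotes the group of automorphisms of G fixing the subgroup S pointwise. -/
instance addAutGroupOld (A : Type*) [Add A] : Group (AddAut A) where
  mul g h := AddEquiv.trans h g
  one := AddEquiv.refl _
  inv := AddEquiv.symm
  mul_assoc _ _ _ := rfl
  one_mul _ := rfl
  mul_one _ := rfl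
  inv_mul_cancel := AddEquiv.self_trans_symm

/-- The subgroup of `AddAut G` consisting of automorphisms fixing the set `P` pointwise. -/
def fixingAutSubgroup (G : Type*) [AddCommGroup G] (P : Set G) : Subgroup (AddAut G) where
  carrier := {σ | ∀ x ∈ P, σ x = x}
  one_mem' := fun _ _ => rfl
  mul_mem' := by
    intro a b ha hb x hx
    show a (b x) = x
    rw [hb x hx, ha x hx]
  inv_mem' := by
    intro a ha x hx
    show a.symm x = x
    conv_lhs => rw [← ha x hx]
    exact a.symm_apply_apply x

namespace Stmt1Aux

variable {M : Type*} [AddCommGroup M] {A B : AddSubgroup M}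

/-- inclusion of `B` into `A ⊔ B`. -/
def toSup (A : AddSubgroup M) (b : ↥B) : ↥(A ⊔ B) := ⟨b, AddSubgroup.mem_sup_right b.2⟩

lemma toSup_add (b c : ↥B) : toSup A (b + c) = toSup A b + toSup A c := Subtype.ext rfl

/-- Restriction of an automorphism of `A ⊔ B` mapping `B` into `B` (as does its inverse)
to an automorphism of `B`. -/
def resAut (σ : AddAut ↥(A ⊔ B))
    (hσ : ∀ x : ↥(A ⊔ B), (x : M) ∈ B → ((σ x : ↥(A ⊔ B)) : M) ∈ B)
    (hσ' : ∀ x : ↥(A ⊔ B), (x : M) ∈ B → ((σ.symm x : ↥(A ⊔ B)) : M) ∈ B) :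
    AddAut ↥B where
  toFun b := ⟨((σ (toSup A b) : ↥(A ⊔ B)) : M), hσ _ b.2⟩
  invFun b := ⟨((σ.symm (toSup A b) : ↥(A ⊔ B)) : M), hσ' _ b.2⟩
  left_inv b := by
    apply Subtype.ext
    show ((σ.symm (toSup A ⟨((σ (toSup A b) : ↥(A ⊔ B)) : M), hσ _ b.2⟩) : ↥(A ⊔ B)) : M) = (b : M)
    have h1 : toSup A (⟨((σ (toSup A b) : ↥(A ⊔ B)) : M), hσ _ b.2⟩ : ↥B) = σ (toSup A b) :=
      Subtype.ext rfl
    rw [h1, σ.symm_apply_apply]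
    rfl
  right_inv b := by
    apply Subtype.ext
    show ((σ (toSup A ⟨((σ.symm (toSup A b) : ↥(A ⊔ B)) : M), hσ' _ b.2⟩) : ↥(A ⊔ B)) : M) = (b : M)
    have h1 : toSup A (⟨((σ.symm (toSup A b) : ↥(A ⊔ B)) : M), hσ' _ b.2⟩ : ↥B)
        = σ.symm (toSup A b) := Subtype.ext rfl
    rw [h1, σ.apply_symm_apply]
    rfl
  map_add' b c := by
    apply Subtype.ext
    show ((σ (toSup A (b + c)) : ↥(A ⊔ B)) : M) = _
    rw [toSup_add, map_add]
    rfl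

@[simp] lemma resAut_apply (σ : AddAut ↥(A ⊔ B)) (hσ) (hσ') (b : ↥B) :
    ((resAut σ hσ hσ' b : ↥B) : M) = ((σ (toSup A b) : ↥(A ⊔ B)) : M) := rfl

lemma exists_decomp (x : ↥(A ⊔ B)) : ∃ p : ↥A × ↥B, ((p.1 : M) + (p.2 : M) = (x : M)) := by
  obtain ⟨a, ha, b, hb, h⟩ := (AddSubgroup.mem_sup).mp x.2
  exact ⟨(⟨a, ha⟩, ⟨b, hb⟩), h⟩

noncomputable def dec (x : ↥(A ⊔ B)) : ↥A × ↥B := (exists_decomp x).choose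

lemma dec_spec (x : ↥(A ⊔ B)) : ((dec x).1 : M) + ((dec x).2 : M) = (x : M) :=
  (exists_decomp x).choose_spec

/-- well-definedness of `a + b ↦ a + τ b`. -/
lemma wd (τ : AddAut ↥B) (hτ : ∀ b : ↥B, (b : M) ∈ A ⊓ B → τ b = b)
    (a a' : ↥A) (b b' : ↥B) (h : (a : M) + (b : M) = (a' : M) + (b' : M)) :
    (a : M) + (τ b : M) = (a' : M) + (τ b' : M) := by
  have hsub : (a : M) - (a' : M) = (b' : M) - (b : M) := by
    rw [sub_eq_sub_iff_add_eq_add, h]; abel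
  have hdA : ((a : M) - (a' : M)) ∈ A := sub_mem a.2 a'.2
  have hdB : ((a : M) - (a' : M)) ∈ B := by rw [hsub]; exact sub_mem b'.2 b.2
  set d : ↥B := ⟨(a : M) - (a' : M), hdB⟩ with hd_def
  have hb' : b' = b + d := by
    apply Subtype.ext
    show (b' : M) = (b : M) + ((a : M) - (a' : M))
    rw [hsub]; abel
  have hfix : τ d = d := hτ d (AddSubgroup.mem_inf.mpr ⟨hdA, hdB⟩)
  rw [hb', map_add, hfix]
  push_cast [hd_def]
  abel

noncomputable def extFun (τ : AddAut ↥B) (x : ↥(A ⊔ B)) : ↥(A ⊔ B) :=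
  ⟨((dec x).1 : M) + (τ (dec x).2 : M),
    add_mem (AddSubgroup.mem_sup_left (dec x).1.2)
      (AddSubgroup.mem_sup_right (τ (dec x).2).2)⟩

lemma extFun_spec (τ : AddAut ↥B) (hτ : ∀ b : ↥B, (b : M) ∈ A ⊓ B → τ b = b)
    (x : ↥(A ⊔ B)) (a : ↥A) (b : ↥B) (h : (a : M) + (b : M) = (x : M)) :
    ((extFun τ x : ↥(A ⊔ B)) : M) = (a : M) + (τ b : M) :=
  wd τ hτ (dec x).1 a (dec x).2 b (by rw [dec_spec, ← h])

lemma symm_fix (τ : AddAut ↥B) (hτ : ∀ b : ↥B, (b : M) ∈ A ⊓ B → τ b = b)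
    (b : ↥B) (hb : (b : M) ∈ A ⊓ B) : τ.symm b = b := by
  conv_lhs => rw [← hτ b hb]
  exact τ.symm_apply_apply b

lemma extFun_leftInv (τ : AddAut ↥B) (hτ : ∀ b : ↥B, (b : M) ∈ A ⊓ B → τ b = b)
    (x : ↥(A ⊔ B)) : extFun τ.symm (extFun τ x) = x := by
  apply Subtype.ext
  have h1 : ((extFun τ x : ↥(A ⊔ B)) : M) = ((dec x).1 : M) + (τ (dec x).2 : M) :=
    extFun_spec τ hτ x (dec x).1 (dec x).2 (dec_spec x)
  rw [extFun_spec τ.symm (symm_fix τ hτ) (extFun τ x) (dec x).1 (τ (dec x).2) h1.symm,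
    τ.symm_apply_apply, dec_spec]

noncomputable def extAut (τ : AddAut ↥B) (hτ : ∀ b : ↥B, (b : M) ∈ A ⊓ B → τ b = b) :
    AddAut ↥(A ⊔ B) where
  toFun := extFun τ
  invFun := extFun τ.symm
  left_inv := extFun_leftInv τ hτ
  right_inv := fun x => by
    have := extFun_leftInv τ.symm (symm_fix τ hτ) x
    simpa using this
  map_add' := fun x y => by
    apply Subtype.ext
    have hx := dec_spec x
    have hy := dec_spec y
    have h : (((dec x).1 + (dec y).1 : ↥A) : M) + (((dec x).2 + (dec y).2 : ↥B) : M)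
        = ((x + y : ↥(A ⊔ B)) : M) := by
      push_cast
      rw [← hx, ← hy]; abel
    rw [extFun_spec τ hτ (x + y) _ _ h]
    show _ = ((extFun τ x : ↥(A ⊔ B)) : M) + ((extFun τ y : ↥(A ⊔ B)) : M)
    rw [extFun_spec τ hτ x (dec x).1 (dec x).2 (dec_spec x),
      extFun_spec τ hτ y (dec y).1 (dec y).2 (dec_spec y), map_add]
    push_cast
    abel

lemma extAut_apply (τ : AddAut ↥B) (hτ) (x : ↥(A ⊔ B)) :
    extAut τ hτ x = extFun τ x := rfl

end Stmt1Aux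

open Stmt1Aux in
/-- If every automorphism of `A ⊔ B` fixing `A ⊓ B` pointwise maps `B`
into `B`, then restriction induces a group isomorphism
`Aut_A(A + B) ≃ Aut_{A ∩ B}(B)`. -/
theorem stmt1 {M : Type*} [AddCommGroup M] (A B : AddSubgroup M)
    (hnorm : ∀ σ : AddAut ↥(A ⊔ B), (∀ x : ↥(A ⊔ B), (x : M) ∈ A ⊓ B → σ x = x) →
      ∀ x : ↥(A ⊔ B), (x : M) ∈ B → ((σ x : ↥(A ⊔ B)) : M) ∈ B) :
    ∃ e : fixingAutSubgroup ↥(A ⊔ B) {x : ↥(A ⊔ B) | (x : M) ∈ A} ≃*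
          fixingAutSubgroup ↥B {x : ↥B | (x : M) ∈ A ⊓ B},
      ∀ (σ : fixingAutSubgroup ↥(A ⊔ B) {x : ↥(A ⊔ B) | (x : M) ∈ A})
        (x : M) (hxB : x ∈ B),
        (((e σ : AddAut ↥B) ⟨x, hxB⟩ : ↥B) : M) =
        (((σ : AddAut ↥(A ⊔ B)) ⟨x, AddSubgroup.mem_sup_right hxB⟩ : ↥(A ⊔ B)) : M) := by
  classical
  set SA := fixingAutSubgroup ↥(A ⊔ B) {x : ↥(A ⊔ B) | (x : M) ∈ A} with hSA
  set SB := fixingAutSubgroup ↥B {x : ↥B | (x : M) ∈ A ⊓ B} with hSB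
  have hmaps : ∀ σ : SA, ∀ x : ↥(A ⊔ B), (x : M) ∈ B →
      (((σ : AddAut ↥(A ⊔ B)) x : ↥(A ⊔ B)) : M) ∈ B := by
    intro σ
    exact hnorm σ (fun x hx => σ.2 x hx.1)
  have hmaps' : ∀ σ : SA, ∀ x : ↥(A ⊔ B), (x : M) ∈ B →
      (((σ : AddAut ↥(A ⊔ B)).symm x : ↥(A ⊔ B)) : M) ∈ B := by
    intro σ
    exact hmaps σ⁻¹
  have hmem : ∀ σ : SA, resAut (σ : AddAut ↥(A ⊔ B)) (hmaps σ) (hmaps' σ) ∈ SB := by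
    intro σ b hb
    apply Subtype.ext
    show (((σ : AddAut ↥(A ⊔ B)) (toSup A b) : ↥(A ⊔ B)) : M) = (b : M)
    have h1 : (σ : AddAut ↥(A ⊔ B)) (toSup A b) = toSup A b := σ.2 (toSup A b) hb.1
    rw [h1]
    rfl
  let ρ : SA →* SB :=
    { toFun := fun σ => ⟨resAut (σ : AddAut ↥(A ⊔ B)) (hmaps σ) (hmaps' σ), hmem σ⟩
      map_one' := by
        apply Subtype.ext
        apply AddEquiv.ext
        intro b
        apply Subtype.ext
        rfl
      map_mul' := fun σ τ => by
        apply Subtype.ext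
        apply AddEquiv.ext
        intro b
        apply Subtype.ext
        show (((σ * τ : SA) : AddAut ↥(A ⊔ B)) (toSup A b) : M) = _
        show (((σ : AddAut ↥(A ⊔ B)) ((τ : AddAut ↥(A ⊔ B)) (toSup A b)) : ↥(A ⊔ B)) : M) = _
        have h1 : toSup A (⟨(((τ : AddAut ↥(A ⊔ B)) (toSup A b) : ↥(A ⊔ B)) : M),
            hmaps τ _ b.2⟩ : ↥B) = (τ : AddAut ↥(A ⊔ B)) (toSup A b) := Subtype.ext rfl
        show _ = (((σ : AddAut ↥(A ⊔ B)) (toSup A (resAut (τ : AddAut ↥(A ⊔ B))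
          (hmaps τ) (hmaps' τ) b)) : ↥(A ⊔ B)) : M)
        rw [show toSup A (resAut (τ : AddAut ↥(A ⊔ B)) (hmaps τ) (hmaps' τ) b)
          = (τ : AddAut ↥(A ⊔ B)) (toSup A b) from Subtype.ext rfl] }
  have hinj : Function.Injective ρ := by
    intro σ τ h
    have hres : ∀ b : ↥B, (((σ : AddAut ↥(A ⊔ B)) (toSup A b) : ↥(A ⊔ B)) : M)
        = (((τ : AddAut ↥(A ⊔ B)) (toSup A b) : ↥(A ⊔ B)) : M) := by
      intro b
      exact congrArg (fun f : SB => (((f : AddAut ↥B) b : ↥B) : M)) h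
    apply Subtype.ext
    apply AddEquiv.ext
    intro x
    have hxd : x = (⟨((dec x).1 : M), AddSubgroup.mem_sup_left (dec x).1.2⟩ : ↥(A ⊔ B))
        + toSup A (dec x).2 := by
      apply Subtype.ext
      exact (dec_spec x).symm
    have hA : ∀ (υ : SA), (υ : AddAut ↥(A ⊔ B))
        (⟨((dec x).1 : M), AddSubgroup.mem_sup_left (dec x).1.2⟩ : ↥(A ⊔ B))
        = ⟨((dec x).1 : M), AddSubgroup.mem_sup_left (dec x).1.2⟩ := fun υ =>
      υ.2 _ (dec x).1.2
    rw [hxd, map_add, map_add, hA σ, hA τ]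
    congr 1
    exact Subtype.ext (hres (dec x).2)
  have hsurj : Function.Surjective ρ := by
    intro τ
    have hτ : ∀ b : ↥B, (b : M) ∈ A ⊓ B → (τ : AddAut ↥B) b = b := τ.2
    have hmemA : extAut (τ : AddAut ↥B) hτ ∈ SA := by
      intro x hx
      apply Subtype.ext
      show ((extFun (τ : AddAut ↥B) x : ↥(A ⊔ B)) : M) = (x : M)
      have h0 : ((⟨(x : M), hx⟩ : ↥A) : M) + ((0 : ↥B) : M) = (x : M) := by simp
      rw [extFun_spec (τ : AddAut ↥B) hτ x ⟨(x : M), hx⟩ 0 h0, map_zero]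
      simp
    refine ⟨⟨extAut (τ : AddAut ↥B) hτ, hmemA⟩, ?_⟩
    apply Subtype.ext
    apply AddEquiv.ext
    intro b
    apply Subtype.ext
    show ((extFun (τ : AddAut ↥B) (toSup A b) : ↥(A ⊔ B)) : M) = (((τ : AddAut ↥B) b : ↥B) : M)
    have h0 : ((0 : ↥A) : M) + (b : M) = ((toSup A b : ↥(A ⊔ B)) : M) := by
      simp [toSup]
    rw [extFun_spec (τ : AddAut ↥B) hτ (toSup A b) 0 b h0]
    simp
  refine ⟨MulEquiv.ofBijective ρ ⟨hinj, hsurj⟩, ?_⟩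
  intro σ x hxB
  rfl
end

section
/- Let B and C be s-extensions of a finitely generated abelian group A, and let φ : B → C be a group homomorphism restricting to the identity on A. Then the kernel of φ is contained in the torsion subgroup of B. Moreover, if the restriction of φ to B[ℓ] is injective for every prime ℓ, then φ is injective. -/
/-- Let `B`, `C` be `s`-extensions of a finitely generated abelian
group `A` and `φ : B →+ C` a homomorphism restricting to the identity on `A`. Then
`ker φ` is contained in the torsion subgroup of `B`; moreover if `φ` is injective on
`B[ℓ]` for every prime `ℓ`, then `φ` is injective. -/
theorem stmt5 {A B C : Type*} [AddCommGroup A] [AddCommGroup B] [AddCommGroup C]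
    (s : ℕ) (hA : AddGroup.FG A)
    (ιB : A →+ B) (ιC : A →+ C)
    (hιB : Function.Injective ιB) (hιC : Function.Injective ιC)
    (htorsB : ∀ b : B, ∃ n : ℕ, 0 < n ∧ n • b ∈ ιB.range)
    (htorsC : ∀ c : C, ∃ n : ℕ, 0 < n ∧ n • c ∈ ιC.range)
    (hembB : ∃ f : ↥(AddCommGroup.torsion B) →+ (Fin s → AddCircle (1 : ℚ)),
      Function.Injective f)
    (hembC : ∃ f : ↥(AddCommGroup.torsion C) →+ (Fin s → AddCircle (1 : ℚ)),
      Function.Injective f)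
    (φ : B →+ C) (hφ : ∀ a : A, φ (ιB a) = ιC a) :
    (∀ b : B, φ b = 0 → IsOfFinAddOrder b) ∧
    ((∀ ℓ : ℕ, ℓ.Prime → ∀ b : B, ℓ • b = 0 → φ b = 0 → b = 0) →
      Function.Injective φ) := by
  have key : ∀ b : B, φ b = 0 → IsOfFinAddOrder b := by
    intro b hb
    obtain ⟨n, hn, a, ha⟩ := htorsB b
    have h1 : ιC a = 0 := by
      rw [← hφ, ha, map_nsmul, hb, smul_zero]
    have h2 : a = 0 := hιC (by simpa using h1)
    have h3 : n • b = 0 := by rw [← ha, h2, map_zero]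
    exact isOfFinAddOrder_iff_nsmul_eq_zero.mpr ⟨n, hn, h3⟩
  refine ⟨key, fun h => (injective_iff_map_eq_zero φ).mpr fun b hb => ?_⟩
  by_contra hb0
  have hfin := key b hb
  set n := addOrderOf b with hn
  have hnpos : 0 < n := hfin.addOrderOf_pos
  have hn1 : n ≠ 1 := fun h1 => hb0 (AddMonoid.addOrderOf_eq_one_iff.mp (hn ▸ h1))
  obtain ⟨ℓ, hℓp, hℓd⟩ := Nat.exists_prime_and_dvd hn1
  obtain ⟨m, hm⟩ := hℓd
  have hc1 : ℓ • (m • b) = 0 := by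
    rw [smul_smul, ← hm, hn, addOrderOf_nsmul_eq_zero]
  have hc2 : φ (m • b) = 0 := by rw [map_nsmul, hb, smul_zero]
  have hc0 : m • b = 0 := h ℓ hℓp (m • b) hc1 hc2
  have hdvd : n ∣ m := addOrderOf_dvd_iff_nsmul_eq_zero.mpr hc0
  have hmpos : 0 < m := Nat.pos_of_ne_zero fun h0 => by
    rw [h0, Nat.mul_zero] at hm; omega
  have : n ≤ m := Nat.le_of_dvd hmpos hdvd
  have : m < n := by
    have := hℓp.two_le
    calc m < 2 * m := by omega
    _ ≤ ℓ * m := Nat.mul_le_mul_right m (hℓp.two_le)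
    _ = n := hm.symm
  omega
end

section
/- Let B be an s-extension of a finitely generated abelian group A, and let C ⊆ B be a subgroup such that every group homomorphism C → B restricting to the identity on A ∩ C has image contained in C. Then: (a) every automorphism of A + C fixing A ∩ C pointwise maps C to itself, and (b) every automorphism of B fixing A pointwise maps A + C to itself. -/
/-- Let `B` be an `s`-extension of a finitely generated subgroup `A`,
and `C ≤ B` a subgroup such that every homomorphism `C →+ B` restricting to the identity
on `A ⊓ C` has image contained in `C`. Then (a) every automorphism of `A ⊔ C` fixing
`A ⊓ C` pointwise maps `C` to itself, and (b) every automorphism of `B` fixing `A`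
pointwise maps `A ⊔ C` to itself. -/
theorem stmt7 {B : Type*} [AddCommGroup B] (s : ℕ) (A C : AddSubgroup B)
    (hfg : AddGroup.FG ↥A)
    (htors : ∀ b : B, ∃ n : ℕ, 0 < n ∧ n • b ∈ A)
    (hemb : ∃ f : ↥(AddCommGroup.torsion B) →+ (Fin s → AddCircle (1 : ℚ)),
      Function.Injective f)
    (hC : ∀ f : ↥C →+ B, (∀ x : ↥C, (x : B) ∈ A → f x = (x : B)) → ∀ x : ↥C, f x ∈ C) :
    (∀ σ : AddAut ↥(A ⊔ C), (∀ x : ↥(A ⊔ C), (x : B) ∈ A ⊓ C → σ x = x) →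
      ∀ x : ↥(A ⊔ C), (x : B) ∈ C → ((σ x : ↥(A ⊔ C)) : B) ∈ C) ∧
    (∀ σ : AddAut B, (∀ a ∈ A, σ a = a) → ∀ x ∈ A ⊔ C, σ x ∈ A ⊔ C) := by
  constructor
  · intro σ hσ x hx
    let ι : ↥C →+ ↥(A ⊔ C) := AddSubgroup.inclusion le_sup_right
    let f : ↥C →+ B := (A ⊔ C).subtype.comp (σ.toAddMonoidHom.comp ι)
    have hf : ∀ y : ↥C, (y : B) ∈ A → f y = (y : B) := by
      intro y hy
      have : σ (ι y) = ι y := hσ (ι y) ⟨hy, y.2⟩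
      show ((σ (ι y) : ↥(A ⊔ C)) : B) = (y : B)
      rw [this]; rfl
    have := hC f hf ⟨(x : B), hx⟩
    have hιx : ι ⟨(x : B), hx⟩ = x := Subtype.ext rfl
    simpa [f, hιx] using this
  · intro σ hσ x hx
    have hCmap : ∀ c ∈ C, σ c ∈ C := by
      intro c hc
      let f : ↥C →+ B := σ.toAddMonoidHom.comp C.subtype
      have hf : ∀ y : ↥C, (y : B) ∈ A → f y = (y : B) := fun y hy => hσ y hy
      exact hC f hf ⟨c, hc⟩
    rcases AddSubgroup.mem_sup.mp hx with ⟨a, ha, c, hc, rfl⟩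
    have : σ (a + c) = a + σ c := by rw [map_add, hσ a ha]
    rw [this]
    exact AddSubgroup.add_mem_sup ha (hCmap c hc)
end

section
/- Let B be an s-extension of a finitely generated abelian group A. There is a canonical group isomorphism Aut_{A+B_tors}(B) ≅ Hom(B/(A+B_tors), B_tors), sending an automorphism σ of B fixing A + B_tors pointwise to the homomorphism [b] ↦ σ(b) − b. -/
/-- Let `B` be an `s`-extension of a finitely generated subgroup `A`.
There is a canonical group isomorphism
`Aut_{A + B_tors}(B) ≅ Hom(B/(A + B_tors), B_tors)`
sending an automorphism `σ` fixing `A + B_tors` pointwise to `[b] ↦ σ b - b`. -/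
theorem stmt9 {B : Type*} [AddCommGroup B] (s : ℕ) (A : AddSubgroup B)
    (hfg : AddGroup.FG ↥A)
    (htors : ∀ b : B, ∃ n : ℕ, 0 < n ∧ n • b ∈ A)
    (hemb : ∃ f : ↥(AddCommGroup.torsion B) →+ (Fin s → AddCircle (1 : ℚ)),
      Function.Injective f) :
    ∃ e : ↥(fixingAutSubgroup B ((A ⊔ AddCommGroup.torsion B : AddSubgroup B) : Set B)) ≃*
        Multiplicative ((B ⧸ (A ⊔ AddCommGroup.torsion B : AddSubgroup B)) →+
          ↥(AddCommGroup.torsion B)),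
      ∀ (σ : fixingAutSubgroup B ((A ⊔ AddCommGroup.torsion B : AddSubgroup B) : Set B))
        (b : B),
        (((Multiplicative.toAdd (e σ)) (QuotientAddGroup.mk b) :
            ↥(AddCommGroup.torsion B)) : B) = (σ : AddAut B) b - b := by
  classical
  set T : AddSubgroup B := A ⊔ AddCommGroup.torsion B with hT
  have htorsle : AddCommGroup.torsion B ≤ T := le_sup_right
  have hAle : A ≤ T := le_sup_left
  have hdiff : ∀ σ : fixingAutSubgroup B (T : Set B), ∀ b : B,
      (σ : AddAut B) b - b ∈ AddCommGroup.torsion B := by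
    intro σ b
    obtain ⟨n, hn, hna⟩ := htors b
    have hfix : (σ : AddAut B) (n • b) = n • b := σ.2 _ (hAle hna)
    have hz : n • ((σ : AddAut B) b - b) = 0 := by
      rw [smul_sub, ← map_nsmul, hfix, sub_self]
    exact isOfFinAddOrder_iff_nsmul_eq_zero.2 ⟨n, hn, hz⟩
  let g : ↥(fixingAutSubgroup B (T : Set B)) → (B →+ ↥(AddCommGroup.torsion B)) := fun σ =>
    { toFun := fun b => ⟨(σ : AddAut B) b - b, hdiff σ b⟩
      map_zero' := by ext; simp
      map_add' := by
        intro x y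
        ext
        push_cast
        rw [map_add]
        abel }
  have hg0 : ∀ σ, ∀ x ∈ T, g σ x = 0 := by
    intro σ x hx
    ext
    simp [g, σ.2 x hx]
  let F : ↥(fixingAutSubgroup B (T : Set B)) → ((B ⧸ T) →+ ↥(AddCommGroup.torsion B)) :=
    fun σ => QuotientAddGroup.lift T (g σ) (hg0 σ)
  have hFapp : ∀ σ (b : B), ((F σ (QuotientAddGroup.mk b) : ↥(AddCommGroup.torsion B)) : B)
      = (σ : AddAut B) b - b := fun σ b => rfl
  have hmk0 : ∀ x ∈ T, (QuotientAddGroup.mk x : B ⧸ T) = 0 := fun x hx =>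
    (QuotientAddGroup.eq_zero_iff x).2 hx
  let aut : ((B ⧸ T) →+ ↥(AddCommGroup.torsion B)) → AddAut B := fun f =>
    { toFun := fun b => b + (f (QuotientAddGroup.mk b) : B)
      invFun := fun b => b - (f (QuotientAddGroup.mk b) : B)
      left_inv := by
        intro b
        have h1 : (QuotientAddGroup.mk (b + (f (QuotientAddGroup.mk b) : B)) : B ⧸ T)
            = QuotientAddGroup.mk b := by
          rw [QuotientAddGroup.mk_add, hmk0 _ (htorsle (f (QuotientAddGroup.mk b)).2), add_zero]
        simp only [h1]
        abel
      right_inv := by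
        intro b
        have h1 : (QuotientAddGroup.mk (b - (f (QuotientAddGroup.mk b) : B)) : B ⧸ T)
            = QuotientAddGroup.mk b := by
          rw [QuotientAddGroup.mk_sub, hmk0 _ (htorsle (f (QuotientAddGroup.mk b)).2), sub_zero]
        simp only [h1]
        abel
      map_add' := by
        intro x y
        simp only [QuotientAddGroup.mk_add, map_add, AddSubgroup.coe_add]
        abel }
  have hautmem : ∀ f, aut f ∈ fixingAutSubgroup B (T : Set B) := by
    intro f x hx
    show x + (f (QuotientAddGroup.mk x) : B) = x
    rw [hmk0 x hx, map_zero]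
    simp
  refine ⟨{ toFun := fun σ => Multiplicative.ofAdd (F σ)
            invFun := fun f => ⟨aut (Multiplicative.toAdd f), hautmem _⟩
            left_inv := ?_
            right_inv := ?_
            map_mul' := ?_ }, ?_⟩
  · intro σ
    ext b
    show b + ((σ : AddAut B) b - b) = (σ : AddAut B) b
    abel
  · intro f
    refine Multiplicative.toAdd.injective ?_
    ext b
    show (aut (Multiplicative.toAdd f)) b - b = ((Multiplicative.toAdd f) (QuotientAddGroup.mk b) : B)
    show b + ((Multiplicative.toAdd f) (QuotientAddGroup.mk b) : B) - b = _
    abel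
  · intro σ τ
    refine Multiplicative.toAdd.injective ?_
    ext b
    show ((σ * τ : ↥(fixingAutSubgroup B (T : Set B))) : AddAut B) b - b
        = ((σ : AddAut B) b - b) + ((τ : AddAut B) b - b)
    have hmul : ((σ * τ : ↥(fixingAutSubgroup B (T : Set B))) : AddAut B) b
        = (σ : AddAut B) ((τ : AddAut B) b) := rfl
    have key : (σ : AddAut B) ((τ : AddAut B) b)
        = (σ : AddAut B) b + ((τ : AddAut B) b - b) := by
      conv_lhs => rw [show (τ : AddAut B) b = b + ((τ : AddAut B) b - b) by abel]
      rw [map_add, σ.2 _ (htorsle (hdiff τ b))]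
    rw [hmul, key]
    abel
  · intro σ b
    exact hFapp σ b
end

section
/- Let B be an s-extension of a finitely generated abelian group A such that B/A has finite exponent. Then the group Aut_A(B) of automorphisms of B fixing A pointwise is finite. -/
/-- Let `B` be an `s`-extension of a finitely generated subgroup `A`
such that `B/A` has finite exponent. Then the group `Aut_A(B)` of automorphisms of `B`
fixing `A` pointwise is finite. -/
theorem stmt11 {B : Type*} [AddCommGroup B] (s : ℕ) (A : AddSubgroup B)
    (hfg : AddGroup.FG ↥A)
    (htors : ∀ b : B, ∃ n : ℕ, 0 < n ∧ n • b ∈ A)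
    (hemb : ∃ f : ↥(AddCommGroup.torsion B) →+ (Fin s → AddCircle (1 : ℚ)),
      Function.Injective f)
    (hexp : ∃ n : ℕ, 0 < n ∧ ∀ b : B, n • b ∈ A) :
    Finite {σ : AddAut B // ∀ a ∈ A, σ a = a} := by
  classical
  obtain ⟨f, hf⟩ := hemb
  obtain ⟨n, hn, hnA⟩ := hexp
  haveI : Fact ((0:ℚ) < 1) := ⟨zero_lt_one⟩
  -- n-torsion of the circle is finite
  have hcirc : Finite {y : AddCircle (1:ℚ) // n • y = 0} := by
    have hsub : {y : AddCircle (1:ℚ) | n • y = 0} ⊆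
        ⋃ d ∈ (n.divisors : Set ℕ), {u : AddCircle (1:ℚ) | addOrderOf u = d} := by
      intro y hy
      have h2 : addOrderOf y ∣ n := addOrderOf_dvd_of_nsmul_eq_zero hy
      exact Set.mem_biUnion (Nat.mem_divisors.mpr ⟨h2, hn.ne'⟩) rfl
    exact Set.Finite.subset (Set.Finite.biUnion (Finset.finite_toSet _)
      (fun d hd => AddCircle.finite_setOfPred_addOrderOf_eq (1:ℚ)
        (Nat.pos_of_mem_divisors hd))) hsub
  -- torsion subgroups of A are finite
  haveI : Module.Finite ℤ ↥A := Module.Finite.iff_addGroup_fg.mpr hfg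
  have htorsA : ∀ (N : AddSubgroup ↥A), (∀ x ∈ N, IsOfFinAddOrder x) → Finite ↥N := by
    intro N hN
    have hNfg : N.FG := by
      have h1 := (Submodule.fg_iff_addSubgroup_fg (AddSubgroup.toIntSubmodule N)).mp
        (IsNoetherian.noetherian _)
      rwa [AddSubgroup.toIntSubmodule_toAddSubgroup] at h1
    haveI : AddGroup.FG ↥N := (AddGroup.fg_iff_addSubgroup_fg N).mpr hNfg
    refine AddCommGroup.finite_of_fg_torsion ↥N (fun x => ?_)
    obtain ⟨k, hk, hk0⟩ := isOfFinAddOrder_iff_nsmul_eq_zero.mp (hN x.1 x.2)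
    exact isOfFinAddOrder_iff_nsmul_eq_zero.mpr ⟨k, hk, Subtype.ext (by
      simpa using hk0)⟩
  -- the multiplication-by-n map T → A
  let g : ↥(AddCommGroup.torsion B) →+ ↥A := AddMonoidHom.mk' (fun t => ⟨n • (t : B), hnA t⟩)
    (fun a b => Subtype.ext (by simp [smul_add]))
  -- kernel of g is finite
  have hker : Finite ↥g.ker := by
    have hinj1 : Function.Injective (fun t : ↥g.ker =>
        (⟨f t.1, by
          have ht := t.2
          rw [AddMonoidHom.mem_ker] at ht
          have h0 : n • (t.1 : B) = 0 := congrArg Subtype.val ht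
          have : n • t.1 = (0 : ↥(AddCommGroup.torsion B)) := Subtype.ext (by simpa using h0)
          calc n • f t.1 = f (n • t.1) := (map_nsmul f _ _).symm
            _ = 0 := by rw [this, map_zero]⟩ :
          {x : Fin s → AddCircle (1:ℚ) // n • x = 0})) := by
      intro a b hab
      exact Subtype.ext (hf (congrArg Subtype.val hab))
    haveI : Finite {x : Fin s → AddCircle (1:ℚ) // n • x = 0} := by
      have hinj2 : Function.Injective (fun x : {x : Fin s → AddCircle (1:ℚ) // n • x = 0} =>
          (fun i => ⟨x.1 i, congrFun x.2 i⟩ : Fin s → {y : AddCircle (1:ℚ) // n • y = 0})) := by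
        intro a b hab
        exact Subtype.ext (funext fun i => congrArg Subtype.val (congrFun hab i))
      exact Finite.of_injective _ hinj2
    exact Finite.of_injective _ hinj1
  -- range of g is finite
  have hrange : Finite ↥g.range := by
    have hle : ∀ x ∈ g.range, IsOfFinAddOrder x := by
      rintro x ⟨t, rfl⟩
      obtain ⟨k, hk, hk0⟩ := isOfFinAddOrder_iff_nsmul_eq_zero.mp t.2
      refine isOfFinAddOrder_iff_nsmul_eq_zero.mpr ⟨k, hk, Subtype.ext ?_⟩
      show k • (n • (t : B)) = 0
      rw [smul_comm, hk0, smul_zero]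
    exact htorsA _ hle
  -- T is finite
  haveI : Finite (↥(AddCommGroup.torsion B) ⧸ g.ker) :=
    Finite.of_equiv _ (QuotientAddGroup.quotientKerEquivRange g).symm.toEquiv
  haveI hTfin : Finite ↥(AddCommGroup.torsion B) :=
    Finite.of_equiv _ (AddSubgroup.addGroupEquivQuotientProdAddSubgroup (s := g.ker)).symm
  -- the quotient B ⧸ (A ⊔ T) is finite
  have hQ : Finite (B ⧸ (A ⊔ AddCommGroup.torsion B)) := by
    set N : AddSubgroup ↥A :=
      (nsmulAddMonoidHom n : ↥A →+ ↥A).range ⊔ AddCommGroup.torsion ↥A with hNdef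
    haveI : AddGroup.FG (↥A ⧸ N) := by
      haveI := hfg
      exact AddGroup.fg_of_surjective (f := QuotientAddGroup.mk' N)
        (QuotientAddGroup.mk'_surjective N)
    haveI hANfin : Finite (↥A ⧸ N) := by
      refine AddCommGroup.finite_of_fg_torsion _ (fun x => ?_)
      refine isOfFinAddOrder_iff_nsmul_eq_zero.mpr ⟨n, hn, ?_⟩
      induction x using QuotientAddGroup.induction_on with
      | H a =>
        rw [← QuotientAddGroup.mk_nsmul]
        rw [QuotientAddGroup.eq_zero_iff]
        exact AddSubgroup.mem_sup_left ⟨a, rfl⟩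
    let g' : B →+ ↥A := AddMonoidHom.mk' (fun b => ⟨n • b, hnA b⟩)
      (fun a b => Subtype.ext (by simp [smul_add]))
    let h : B →+ ↥A ⧸ N := (QuotientAddGroup.mk' N).comp g'
    have hkereq : (A ⊔ AddCommGroup.torsion B) = h.ker := by
      apply le_antisymm
      · refine sup_le ?_ ?_
        · intro a ha
          rw [AddMonoidHom.mem_ker]
          show (QuotientAddGroup.mk' N) ⟨n • a, hnA a⟩ = 0
          rw [QuotientAddGroup.mk'_apply, QuotientAddGroup.eq_zero_iff]
          exact AddSubgroup.mem_sup_left ⟨⟨a, ha⟩, rfl⟩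
        · intro t ht
          rw [AddMonoidHom.mem_ker]
          show (QuotientAddGroup.mk' N) ⟨n • t, hnA t⟩ = 0
          rw [QuotientAddGroup.mk'_apply, QuotientAddGroup.eq_zero_iff]
          refine AddSubgroup.mem_sup_right ?_
          obtain ⟨k, hk, hk0⟩ := isOfFinAddOrder_iff_nsmul_eq_zero.mp ht
          refine isOfFinAddOrder_iff_nsmul_eq_zero.mpr ⟨k, hk, Subtype.ext ?_⟩
          show k • (n • t) = (0 : B)
          rw [smul_comm, hk0, smul_zero]
      · intro b hb
        rw [AddMonoidHom.mem_ker] at hb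
        have hb' : (⟨n • b, hnA b⟩ : ↥A) ∈ N :=
          (QuotientAddGroup.eq_zero_iff _).mp hb
        rw [hNdef, AddSubgroup.mem_sup] at hb'
        obtain ⟨y, ⟨a, rfl⟩, z, hz, hyz⟩ := hb'
        have hB : n • b = n • (a : B) + (z : B) := by
          have := congrArg Subtype.val hyz
          simpa using this.symm
        obtain ⟨k, hk, hk0⟩ := isOfFinAddOrder_iff_nsmul_eq_zero.mp hz
        have hz0 : k • (z : B) = 0 := congrArg Subtype.val hk0
        have hba : (n * k) • (b - (a : B)) = 0 := by
          rw [mul_comm, mul_smul, smul_sub, ← hz0]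
          rw [show n • b - n • (a:B) = (z : B) by rw [hB]; abel]
        have hmem : b - (a : B) ∈ AddCommGroup.torsion B :=
          isOfFinAddOrder_iff_nsmul_eq_zero.mpr
            ⟨n * k, Nat.mul_pos hn hk, hba⟩
        have : b = (a : B) + (b - a) := by abel
        rw [this]
        exact AddSubgroup.add_mem _ (AddSubgroup.mem_sup_left a.2)
          (AddSubgroup.mem_sup_right hmem)
    rw [hkereq]
    exact Finite.of_equiv _ (QuotientAddGroup.quotientKerEquivRange h).symm.toEquiv
  -- final assembly
  set C : AddSubgroup B := A ⊔ AddCommGroup.torsion B with hCdef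
  have hmv : ∀ (σ : {σ : AddAut B // ∀ a ∈ A, σ a = a}) (b : B),
      σ.1 b - b ∈ AddCommGroup.torsion B := by
    intro σ b
    refine isOfFinAddOrder_iff_nsmul_eq_zero.mpr ⟨n, hn, ?_⟩
    have : σ.1 (n • b) = n • b := σ.2 _ (hnA b)
    rw [smul_sub, ← map_nsmul, this, sub_self]
  have hpres : ∀ (σ : {σ : AddAut B // ∀ a ∈ A, σ a = a}) (t : ↥(AddCommGroup.torsion B)),
      σ.1 t ∈ AddCommGroup.torsion B := by
    intro σ t
    obtain ⟨k, hk, hk0⟩ := isOfFinAddOrder_iff_nsmul_eq_zero.mp t.2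
    refine isOfFinAddOrder_iff_nsmul_eq_zero.mpr ⟨k, hk, ?_⟩
    rw [← map_nsmul, hk0, map_zero]
  let Φ : {σ : AddAut B // ∀ a ∈ A, σ a = a} →
      (↥(AddCommGroup.torsion B) → ↥(AddCommGroup.torsion B)) ×
        ((B ⧸ C) → ↥(AddCommGroup.torsion B)) := fun σ =>
    (fun t => ⟨σ.1 t, hpres σ t⟩,
     fun q => ⟨σ.1 (Quotient.out q) - Quotient.out q, hmv σ _⟩)
  have hΦ : Function.Injective Φ := by
    intro σ τ hστ
    have h1 : ∀ t : ↥(AddCommGroup.torsion B), σ.1 t = τ.1 t := fun t =>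
      congrArg Subtype.val (congrFun (congrArg Prod.fst hστ) t)
    have h2 : ∀ q : B ⧸ C, σ.1 (Quotient.out q) = τ.1 (Quotient.out q) := by
      intro q
      have := congrArg Subtype.val (congrFun (congrArg Prod.snd hστ) q)
      simpa [Φ, sub_left_inj] using this
    refine Subtype.ext (AddEquiv.ext fun b => ?_)
    set q : B ⧸ C := QuotientAddGroup.mk b with hq
    set r : B := Quotient.out q with hrdef
    have hr : QuotientAddGroup.mk (s := C) r = QuotientAddGroup.mk b := by
      rw [hrdef, hq]
      exact Quotient.out_eq q
    have hbr : b - r ∈ C := by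
      have := (QuotientAddGroup.eq (s := C)).mp hr
      simpa [neg_add_eq_sub] using this
    rw [hCdef, AddSubgroup.mem_sup] at hbr
    obtain ⟨a, ha, t, ht, hat⟩ := hbr
    have hb : b = a + t + r := by rw [hat]; abel
    rw [hb]
    simp only [map_add]
    rw [σ.2 a ha, τ.2 a ha, h1 ⟨t, ht⟩, h2 q]
  exact Finite.of_injective Φ hΦ
end

section
/- Let ℓ be a prime, R = Mat_{s×s}(ℤ_ℓ), and M = Mat_{s×r}(ℤ_ℓ) as a left R-module. Let H be a closed subgroup of GL_s(ℤ_ℓ) and V ⊆ M a closed subgroup stable under left multiplication by H. Let W = R·V be the R-submodule generated by V, and let S be the closed ℤ_ℓ-subalgebra of R generated by H. If W ⊇ ℓ^n M and S ⊇ ℓ^m R for non-negative integers n, m, then V ⊇ ℓ^{n+m} M. -/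
set_option synthInstance.maxHeartbeats 800000
set_option maxHeartbeats 1600000

/-- A closed additive subgroup of matrices over `ℤ_[ℓ]` is stable under `ℤ_[ℓ]`-scalars. -/
lemma closed_addSubgroup_smul_mem (ℓ : ℕ) [Fact ℓ.Prime] (s r : ℕ)
    (V : AddSubgroup (Matrix (Fin s) (Fin r) ℤ_[ℓ]))
    (hVclosed : IsClosed (V : Set (Matrix (Fin s) (Fin r) ℤ_[ℓ])))
    (c : ℤ_[ℓ]) {v : Matrix (Fin s) (Fin r) ℤ_[ℓ]} (hv : v ∈ V) : c • v ∈ V := by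
  have hcont : Continuous (fun c : ℤ_[ℓ] => c • v) := continuous_id.smul continuous_const
  have hcl : IsClosed {c : ℤ_[ℓ] | c • v ∈ V} := hVclosed.preimage hcont
  have hdense : ∀ k : ℤ, ((k : ℤ_[ℓ]) • v) ∈ V := by
    intro k
    have : (k : ℤ_[ℓ]) • v = k • v := by
      simp [Int.cast_smul_eq_zsmul]
    rw [this]
    exact zsmul_mem hv k
  have hd : Dense {c : ℤ_[ℓ] | c • v ∈ V} :=
    (PadicInt.denseRange_intCast).mono (Set.range_subset_iff.mpr hdense)
  have huniv : {c : ℤ_[ℓ] | c • v ∈ V} = Set.univ := by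
    rw [← hcl.closure_eq]; exact hd.closure_eq
  exact Set.eq_univ_iff_forall.mp huniv c

/-- Let `ℓ` be a prime, `R = Mat_{s×s}(ℤ_ℓ)`, `M = Mat_{s×r}(ℤ_ℓ)`.
Let `H ≤ GL_s(ℤ_ℓ)` be a closed subgroup and `V ⊆ M` a closed subgroup stable under
left multiplication by `H`. Let `W = R·V` and let `S` be the closed
`ℤ_ℓ`-subalgebra of `R` generated by `H`. If `W ⊇ ℓ^n M` and `S ⊇ ℓ^m R`, then
`V ⊇ ℓ^{n+m} M`. -/
theorem stmt16 (ℓ : ℕ) [Fact ℓ.Prime] (s r : ℕ) (n m : ℕ)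
    (H : Subgroup (Matrix (Fin s) (Fin s) ℤ_[ℓ])ˣ)
    (hHclosed : IsClosed (Units.val '' (H : Set (Matrix (Fin s) (Fin s) ℤ_[ℓ])ˣ)))
    (V : AddSubgroup (Matrix (Fin s) (Fin r) ℤ_[ℓ]))
    (hVclosed : IsClosed (V : Set (Matrix (Fin s) (Fin r) ℤ_[ℓ])))
    (hHV : ∀ u ∈ H, ∀ v ∈ V,
      ((u : (Matrix (Fin s) (Fin s) ℤ_[ℓ])ˣ) : Matrix (Fin s) (Fin s) ℤ_[ℓ]) * v ∈ V)
    -- `W = R·V ⊇ ℓ^n M`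
    (hW : ∀ x : Matrix (Fin s) (Fin r) ℤ_[ℓ],
      ((ℓ : ℤ_[ℓ]) ^ n) • x ∈ AddSubgroup.closure
        {y : Matrix (Fin s) (Fin r) ℤ_[ℓ] |
          ∃ g : Matrix (Fin s) (Fin s) ℤ_[ℓ], ∃ v ∈ V, y = g * v})
    -- `S ⊇ ℓ^m R`
    (hS : ∀ g : Matrix (Fin s) (Fin s) ℤ_[ℓ],
      ((ℓ : ℤ_[ℓ]) ^ m) • g ∈
        (Algebra.adjoin ℤ_[ℓ]
          (Units.val '' (H : Set (Matrix (Fin s) (Fin s) ℤ_[ℓ])ˣ))).topologicalClosure) :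
    ∀ x : Matrix (Fin s) (Fin r) ℤ_[ℓ], ((ℓ : ℤ_[ℓ]) ^ (n + m)) • x ∈ V := by
  -- Step 1: V is stable under the adjoin algebra
  have hadj : ∀ a ∈ Algebra.adjoin ℤ_[ℓ]
      (Units.val '' (H : Set (Matrix (Fin s) (Fin s) ℤ_[ℓ])ˣ)),
      ∀ v ∈ V, a * v ∈ V := by
    intro a ha
    induction ha using Algebra.adjoin_induction with
    | mem u hu =>
      obtain ⟨u, huH, rfl⟩ := hu
      exact fun v hv => hHV u huH v hv
    | algebraMap c =>
      intro v hv
      have : (algebraMap ℤ_[ℓ] (Matrix (Fin s) (Fin s) ℤ_[ℓ]) c) * v = c • v := by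
        rw [Algebra.algebraMap_eq_smul_one, Matrix.smul_mul, Matrix.one_mul]
      rw [this]
      exact closed_addSubgroup_smul_mem ℓ s r V hVclosed c hv
    | add x y _ _ hx hy =>
      intro v hv
      rw [Matrix.add_mul]
      exact add_mem (hx v hv) (hy v hv)
    | mul x y _ _ hx hy =>
      intro v hv
      rw [Matrix.mul_assoc]
      exact hx _ (hy v hv)
  -- Step 2: V is stable under the closure of the adjoin algebra
  have hScl : ∀ a ∈ (Algebra.adjoin ℤ_[ℓ]
      (Units.val '' (H : Set (Matrix (Fin s) (Fin s) ℤ_[ℓ])ˣ))).topologicalClosure,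
      ∀ v ∈ V, a * v ∈ V := by
    intro a ha v hv
    have hcont : Continuous (fun g : Matrix (Fin s) (Fin s) ℤ_[ℓ] => g * v) :=
      continuous_id.matrix_mul continuous_const
    have hcl : IsClosed {g : Matrix (Fin s) (Fin s) ℤ_[ℓ] | g * v ∈ V} :=
      hVclosed.preimage hcont
    have hsub : (Algebra.adjoin ℤ_[ℓ]
        (Units.val '' (H : Set (Matrix (Fin s) (Fin s) ℤ_[ℓ])ˣ)) : Set (Matrix (Fin s) (Fin s) ℤ_[ℓ])) ⊆
        {g | g * v ∈ V} := fun g hg => hadj g (by exact hg) v hv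
    exact hcl.closure_subset_iff.mpr hsub ha
  intro x
  have h1 := hW x
  have key : ∀ y ∈ AddSubgroup.closure
      {y : Matrix (Fin s) (Fin r) ℤ_[ℓ] |
        ∃ g : Matrix (Fin s) (Fin s) ℤ_[ℓ], ∃ v ∈ V, y = g * v},
      ((ℓ : ℤ_[ℓ]) ^ m) • y ∈ V := by
    intro y hy
    induction hy using AddSubgroup.closure_induction with
    | mem z hz =>
      obtain ⟨g, v, hv, rfl⟩ := hz
      have : ((ℓ : ℤ_[ℓ]) ^ m) • (g * v) = (((ℓ : ℤ_[ℓ]) ^ m) • g) * v := by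
        rw [Matrix.smul_mul]
      rw [this]
      exact hScl _ (hS g) v hv
    | zero => simpa using V.zero_mem
    | add a b _ _ ha hb => rw [smul_add]; exact add_mem ha hb
    | neg a _ ha => rw [smul_neg]; exact neg_mem ha
  have := key _ h1
  rwa [smul_smul, ← pow_add, add_comm m n] at this
end

section
/- Let R = Mat_{s×s}(Ẑ) and M = Mat_{s×r}(Ẑ). Let H be a closed subgroup of GL_s(Ẑ) and V ⊆ M a closed subgroup stable under left multiplication by H; let W = R·V. For each prime ℓ let H_ℓ be the image of H in GL_s(ℤ_ℓ) and ℤ_ℓ[H_ℓ] the closed ℤ_ℓ-subalgebra of Mat_{s×s}(ℤ_ℓ) generated by H_ℓ. Suppose there are positive integers n, m with W ⊇ nM and ℤ_ℓ[H_ℓ] ⊇ ℓ^{v_ℓ(m)} Mat_{s×s}(ℤ_ℓ) for all primes ℓ. Then V ⊇ nm·M. -/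
set_option synthInstance.maxHeartbeats 800000
set_option maxHeartbeats 1600000

instance (p : Nat.Primes) : Fact (Nat.Prime (p : ℕ)) := ⟨p.2⟩

lemma crt_two (u v a b : ℤ) (h : IsCoprime u v) :
    ∃ N : ℤ, u ∣ N - a ∧ v ∣ N - b := by
  obtain ⟨x, y, hxy⟩ := h
  refine ⟨b * (x * u) + a * (y * v), ⟨(b - a) * x, by linear_combination a * hxy⟩,
    ⟨(a - b) * y, by linear_combination b * hxy⟩⟩

lemma crt_finset (I : Finset Nat.Primes) (k : ℕ) (a : Nat.Primes → ℤ) :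
    ∃ N : ℤ, ∀ p ∈ I, ((p : ℕ) : ℤ) ^ k ∣ N - a p := by
  classical
  induction I using Finset.induction_on with
  | empty => exact ⟨0, fun p hp => absurd hp (Finset.notMem_empty p)⟩
  | @insert p I hp ih =>
    obtain ⟨N', hN'⟩ := ih
    have hcop : IsCoprime (((p : ℕ) : ℤ) ^ k) (∏ q ∈ I, ((q : ℕ) : ℤ) ^ k) := by
      apply IsCoprime.prod_right
      intro q hq
      have hne : (p : ℕ) ≠ (q : ℕ) := by
        intro h
        exact hp (by rwa [show p = q from Subtype.ext h])
      have : Nat.Coprime ((p : ℕ) ^ k) ((q : ℕ) ^ k) :=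
        Nat.Coprime.pow k k ((Nat.coprime_primes p.2 q.2).mpr hne)
      have := Nat.isCoprime_iff_coprime.mpr this
      push_cast at this
      exact this
    obtain ⟨N, h1, h2⟩ := crt_two _ _ (a p) N' hcop
    refine ⟨N, fun q hq => ?_⟩
    rcases Finset.mem_insert.mp hq with rfl | hq'
    · exact h1
    · have hd : ((q : ℕ) : ℤ) ^ k ∣ N - N' :=
        dvd_trans (Finset.dvd_prod_of_mem (fun q : Nat.Primes => ((q : ℕ) : ℤ) ^ k) hq') h2
      have := dvd_add hd (hN' q hq')
      simpa using this

lemma dense_step (I : Finset Nat.Primes) (t : (p : Nat.Primes) → ℤ_[(p : ℕ)])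
    (w : (p : Nat.Primes) → Set ℤ_[(p : ℕ)]) (hw : ∀ p ∈ I, w p ∈ nhds (t p)) :
    ∃ N : ℤ, ∀ p ∈ I, ((N : ℤ_[(p : ℕ)]) ∈ w p) := by
  classical
  have key : ∀ p : Nat.Primes, ∃ k : ℕ, p ∈ I →
      ∀ z : ℤ_[(p : ℕ)], (((p : ℕ) : ℤ_[(p : ℕ)])) ^ k ∣ z - t p → z ∈ w p := by
    intro p
    by_cases hp : p ∈ I
    · obtain ⟨ε, hε, hball⟩ := Metric.mem_nhds_iff.mp (hw p hp)
      have hlt : (((p : ℕ) : ℝ))⁻¹ < 1 := by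
        rw [inv_lt_one_iff₀]
        right
        exact_mod_cast p.2.one_lt
      obtain ⟨k, hk⟩ := exists_pow_lt_of_lt_one hε hlt
      refine ⟨k, fun _ z hz => hball ?_⟩
      have h1 : ‖z - t p‖ ≤ ((p : ℕ) : ℝ) ^ (-(k : ℤ)) := by
        rw [PadicInt.norm_le_pow_iff_mem_span_pow, Ideal.mem_span_singleton]
        exact hz
      have h2 : ((p : ℕ) : ℝ) ^ (-(k : ℤ)) = (((p : ℕ) : ℝ))⁻¹ ^ k := by
        rw [zpow_neg, zpow_natCast, inv_pow]
      rw [Metric.mem_ball, dist_eq_norm]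
      calc ‖z - t p‖ ≤ _ := h1
        _ = _ := h2
        _ < ε := hk
    · exact ⟨0, fun h => absurd h hp⟩
  choose k hk using key
  set K := I.sup k with hK
  obtain ⟨N, hN⟩ := crt_finset I K (fun p => ((t p).appr K : ℤ))
  refine ⟨N, fun p hp => ?_⟩
  have hd1 : (((p : ℕ) : ℤ_[(p : ℕ)])) ^ K ∣ (N : ℤ_[(p : ℕ)]) - ((t p).appr K : ℤ_[(p : ℕ)]) := by
    have := map_dvd (Int.castRingHom ℤ_[(p : ℕ)]) (hN p hp)
    push_cast at this
    exact_mod_cast this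
  have hd2 : (((p : ℕ) : ℤ_[(p : ℕ)])) ^ K ∣ t p - ((t p).appr K : ℤ_[(p : ℕ)]) := by
    have := (t p).appr_spec K
    rwa [Ideal.mem_span_singleton] at this
  have hd3 : (((p : ℕ) : ℤ_[(p : ℕ)])) ^ K ∣ (N : ℤ_[(p : ℕ)]) - t p := by
    have := dvd_sub hd1 hd2
    simpa using this
  exact hk p hp (N : ℤ_[(p : ℕ)]) (dvd_trans (pow_dvd_pow _ (Finset.le_sup hp)) hd3)

lemma single_mem {s r : ℕ}
    (V : AddSubgroup ((p : Nat.Primes) → Matrix (Fin s) (Fin r) ℤ_[(p : ℕ)]))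
    (hVclosed : IsClosed (V : Set ((p : Nat.Primes) → Matrix (Fin s) (Fin r) ℤ_[(p : ℕ)])))
    (q : Nat.Primes) (c : ℤ_[(q : ℕ)])
    (y : (p : Nat.Primes) → Matrix (Fin s) (Fin r) ℤ_[(p : ℕ)]) (hy : y ∈ V) :
    Pi.single q (c • y q) ∈ V := by
  classical
  have hcl : Pi.single q (c • y q) ∈ closure (V : Set ((p : Nat.Primes) → Matrix (Fin s) (Fin r) ℤ_[(p : ℕ)])) := by
    rw [mem_closure_iff]
    intro U hU hxU
    obtain ⟨I, u, hu, hsub⟩ := isOpen_pi_iff.mp hU _ hxU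
    have hw : ∀ p ∈ I, {a : ℤ_[(p : ℕ)] | a • y p ∈ u p} ∈
        nhds (Pi.single (M := fun p : Nat.Primes => ℤ_[(p : ℕ)]) q c p) := by
      intro p hp
      have hcont : Continuous fun a : ℤ_[(p : ℕ)] => a • y p :=
        continuous_id.smul continuous_const
      have heq : (Pi.single (M := fun p : Nat.Primes => ℤ_[(p : ℕ)]) q c p) • y p
          = Pi.single (M := fun p : Nat.Primes => Matrix (Fin s) (Fin r) ℤ_[(p : ℕ)]) q (c • y q) p := by
        rcases eq_or_ne p q with rfl | hne
        · simp
        · simp [Pi.single_eq_of_ne hne]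
      have hnh : u p ∈ nhds ((Pi.single (M := fun p : Nat.Primes => ℤ_[(p : ℕ)]) q c p) • y p) := by
        rw [heq]
        exact (hu p hp).1.mem_nhds (hu p hp).2
      exact hcont.continuousAt.preimage_mem_nhds hnh
    obtain ⟨N, hN⟩ := dense_step I (Pi.single q c) _ hw
    refine ⟨N • y, hsub fun p hp => ?_, V.zsmul_mem hy N⟩
    have h2 : (N : ℤ_[(p : ℕ)]) • y p = (N • y) p := by
      rw [Pi.smul_apply]
      exact Int.cast_smul_eq_zsmul _ _ _
    rw [← h2]
    exact hN p hp
  rwa [hVclosed.closure_eq] at hcl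

/-- Write `Mat_{s×r}(Ẑ) = ∏_ℓ Mat_{s×r}(ℤ_ℓ)` and
`GL_s(Ẑ) = (∏_ℓ Mat_{s×s}(ℤ_ℓ))ˣ`. Let `H ≤ GL_s(Ẑ)` be a closed subgroup and
`V ⊆ M = Mat_{s×r}(Ẑ)` a closed subgroup stable under left multiplication by `H`;
let `W = R·V`. For each prime `ℓ` let `H_ℓ` be the image of `H` in `GL_s(ℤ_ℓ)` and
`ℤ_ℓ[H_ℓ]` the closed `ℤ_ℓ`-subalgebra generated by `H_ℓ`. If there are positive
integers `n, m` with `W ⊇ n·M` and `ℤ_ℓ[H_ℓ] ⊇ ℓ^{v_ℓ(m)}·Mat_{s×s}(ℤ_ℓ)` for all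
primes `ℓ`, then `V ⊇ nm·M`. -/
theorem stmt17 (s r : ℕ) (n m : ℕ) (hn : 0 < n) (hm : 0 < m)
    (H : Subgroup ((p : Nat.Primes) → Matrix (Fin s) (Fin s) ℤ_[(p : ℕ)])ˣ)
    (hHclosed : IsClosed (Units.val ''
      (H : Set ((p : Nat.Primes) → Matrix (Fin s) (Fin s) ℤ_[(p : ℕ)])ˣ)))
    (V : AddSubgroup ((p : Nat.Primes) → Matrix (Fin s) (Fin r) ℤ_[(p : ℕ)]))
    (hVclosed : IsClosed (V : Set ((p : Nat.Primes) → Matrix (Fin s) (Fin r) ℤ_[(p : ℕ)])))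
    (hHV : ∀ u ∈ H, ∀ v ∈ V,
      (fun p => ((u : (p : Nat.Primes) → Matrix (Fin s) (Fin s) ℤ_[(p : ℕ)]) p) * v p) ∈ V)
    -- `W = R·V ⊇ n·M`
    (hW : ∀ x : (p : Nat.Primes) → Matrix (Fin s) (Fin r) ℤ_[(p : ℕ)],
      n • x ∈ AddSubgroup.closure
        {y : (p : Nat.Primes) → Matrix (Fin s) (Fin r) ℤ_[(p : ℕ)] |
          ∃ g : (p : Nat.Primes) → Matrix (Fin s) (Fin s) ℤ_[(p : ℕ)],
            ∃ v ∈ V, y = fun p => g p * v p})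
    -- `ℤ_ℓ[H_ℓ] ⊇ ℓ^{v_ℓ(m)}·Mat_{s×s}(ℤ_ℓ)` for every prime `ℓ`
    (hS : ∀ (p : Nat.Primes) (g : Matrix (Fin s) (Fin s) ℤ_[(p : ℕ)]),
      (((p : ℕ) : ℤ_[(p : ℕ)]) ^ (m.factorization (p : ℕ))) • g ∈
        (Algebra.adjoin ℤ_[(p : ℕ)]
          {h : Matrix (Fin s) (Fin s) ℤ_[(p : ℕ)] |
            ∃ u ∈ H, (u : (q : Nat.Primes) → Matrix (Fin s) (Fin s) ℤ_[(q : ℕ)]) p = h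
          }).topologicalClosure) :
    ∀ x : (p : Nat.Primes) → Matrix (Fin s) (Fin r) ℤ_[(p : ℕ)], (n * m) • x ∈ V := by
  classical
  intro x
  have hloc : ∀ q : Nat.Primes, Pi.single q ((n * m) • x q) ∈ V := by
    intro q
    -- the subgroup of the q-th coordinate
    let σ : Matrix (Fin s) (Fin r) ℤ_[(q : ℕ)] →+
        ((p : Nat.Primes) → Matrix (Fin s) (Fin r) ℤ_[(p : ℕ)]) :=
      AddMonoidHom.mk'
        (Pi.single (M := fun p : Nat.Primes => Matrix (Fin s) (Fin r) ℤ_[(p : ℕ)]) q)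
        (fun a b => by rw [Pi.single_add])
    let Vq : AddSubgroup (Matrix (Fin s) (Fin r) ℤ_[(q : ℕ)]) := V.comap σ
    have hVq : ∀ z : Matrix (Fin s) (Fin r) ℤ_[(q : ℕ)], z ∈ Vq ↔ Pi.single q z ∈ V :=
      fun z => Iff.rfl
    have hVqsmul : ∀ (c : ℤ_[(q : ℕ)]) z, z ∈ Vq → c • z ∈ Vq := by
      intro c z hz
      have h := single_mem V hVclosed q c (Pi.single q z) ((hVq z).mp hz)
      rw [hVq]
      simpa using h
    have hVqproj : ∀ y ∈ V, y q ∈ Vq := by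
      intro y hy
      have h := single_mem V hVclosed q 1 y hy
      rw [hVq]
      simpa using h
    have hVqH : ∀ u ∈ H, ∀ z ∈ Vq,
        ((u : (p : Nat.Primes) → Matrix (Fin s) (Fin s) ℤ_[(p : ℕ)]) q) * z ∈ Vq := by
      intro u hu z hz
      have h1 := hHV u hu (Pi.single q z) ((hVq z).mp hz)
      have h2 : (fun p => ((u : (p : Nat.Primes) → Matrix (Fin s) (Fin s) ℤ_[(p : ℕ)]) p)
            * Pi.single (M := fun p : Nat.Primes => Matrix (Fin s) (Fin r) ℤ_[(p : ℕ)]) q z p)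
          = Pi.single (M := fun p : Nat.Primes => Matrix (Fin s) (Fin r) ℤ_[(p : ℕ)]) q
              (((u : (p : Nat.Primes) → Matrix (Fin s) (Fin s) ℤ_[(p : ℕ)]) q) * z) := by
        funext p
        rcases eq_or_ne p q with rfl | hne
        · simp
        · simp [Pi.single_eq_of_ne hne]
      rw [h2] at h1
      exact (hVq _).mpr h1
    have hσcont : Continuous
        (Pi.single (M := fun p : Nat.Primes => Matrix (Fin s) (Fin r) ℤ_[(p : ℕ)]) q) := by
      apply continuous_pi
      intro p
      rcases eq_or_ne p q with rfl | hne
      · simpa using continuous_id'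
      · simp only [Pi.single_eq_of_ne hne]
        exact continuous_const
    have hVqclosed : IsClosed (Vq : Set (Matrix (Fin s) (Fin r) ℤ_[(q : ℕ)])) :=
      hVclosed.preimage hσcont
    -- the adjoined algebra acts on Vq
    have hadj : ∀ a ∈ Algebra.adjoin ℤ_[(q : ℕ)]
        {h : Matrix (Fin s) (Fin s) ℤ_[(q : ℕ)] |
          ∃ u ∈ H, (u : (p : Nat.Primes) → Matrix (Fin s) (Fin s) ℤ_[(p : ℕ)]) q = h},
        ∀ z ∈ Vq, a * z ∈ Vq := by
      intro a ha
      induction ha using Algebra.adjoin_induction with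
      | mem h hh =>
        obtain ⟨u, hu, rfl⟩ := hh
        intro z hz
        exact hVqH u hu z hz
      | algebraMap c =>
        intro z hz
        rw [Algebra.algebraMap_eq_smul_one, Matrix.smul_mul, Matrix.one_mul]
        exact hVqsmul c z hz
      | add a b _ _ ha hb =>
        intro z hz
        rw [Matrix.add_mul]
        exact Vq.add_mem (ha z hz) (hb z hz)
      | mul a b _ _ ha hb =>
        intro z hz
        rw [Matrix.mul_assoc]
        exact ha _ (hb z hz)
    have hA : ∀ a ∈ (Algebra.adjoin ℤ_[(q : ℕ)]
        {h : Matrix (Fin s) (Fin s) ℤ_[(q : ℕ)] |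
          ∃ u ∈ H, (u : (p : Nat.Primes) → Matrix (Fin s) (Fin s) ℤ_[(p : ℕ)]) q = h
          }).topologicalClosure,
        ∀ z ∈ Vq, a * z ∈ Vq := by
      intro a ha z hz
      have hC : IsClosed {b : Matrix (Fin s) (Fin s) ℤ_[(q : ℕ)] | b * z ∈ Vq} :=
        hVqclosed.preimage (continuous_id.matrix_mul continuous_const)
      have hsubC : (Algebra.adjoin ℤ_[(q : ℕ)]
          {h : Matrix (Fin s) (Fin s) ℤ_[(q : ℕ)] |
            ∃ u ∈ H, (u : (p : Nat.Primes) → Matrix (Fin s) (Fin s) ℤ_[(p : ℕ)]) q = h}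
          : Set (Matrix (Fin s) (Fin s) ℤ_[(q : ℕ)]))
          ⊆ {b | b * z ∈ Vq} :=
        fun b hb => hadj b hb z hz
      have hmem : a ∈ closure (Algebra.adjoin ℤ_[(q : ℕ)]
          {h : Matrix (Fin s) (Fin s) ℤ_[(q : ℕ)] |
            ∃ u ∈ H, (u : (p : Nat.Primes) → Matrix (Fin s) (Fin s) ℤ_[(p : ℕ)]) q = h}
          : Set (Matrix (Fin s) (Fin s) ℤ_[(q : ℕ)])) := by
        rwa [← Subalgebra.topologicalClosure_coe]
      exact hC.closure_subset_iff.mpr hsubC hmem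
    -- m times a generator of W_q lies in Vq
    have hgen : ∀ (g : Matrix (Fin s) (Fin s) ℤ_[(q : ℕ)]) z, z ∈ Vq → m • (g * z) ∈ Vq := by
      intro g z hz
      have hmfac : ((q : ℕ) : ℤ_[(q : ℕ)]) ^ (m.factorization (q : ℕ)) *
          ((m / (q : ℕ) ^ (m.factorization (q : ℕ)) : ℕ) : ℤ_[(q : ℕ)]) = (m : ℤ_[(q : ℕ)]) := by
        rw [← Nat.cast_pow, ← Nat.cast_mul, Nat.ordProj_mul_ordCompl_eq_self]
      have h1 := hS q (((m / (q : ℕ) ^ (m.factorization (q : ℕ)) : ℕ) : ℤ_[(q : ℕ)]) • g)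
      rw [smul_smul, hmfac] at h1
      have h2 := hA _ h1 z hz
      rwa [Matrix.smul_mul, Nat.cast_smul_eq_nsmul] at h2
    -- projection of W to the q-th coordinate
    have hWq : n • x q ∈ AddSubgroup.closure
        {y : Matrix (Fin s) (Fin r) ℤ_[(q : ℕ)] | ∃ g, ∃ z ∈ Vq, y = g * z} := by
      have h0 := hW x
      have h1 := AddSubgroup.mem_map_of_mem
        (Pi.evalAddMonoidHom (fun p : Nat.Primes => Matrix (Fin s) (Fin r) ℤ_[(p : ℕ)]) q) h0
      rw [AddMonoidHom.map_closure] at h1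
      have h2 : (Pi.evalAddMonoidHom (fun p : Nat.Primes => Matrix (Fin s) (Fin r) ℤ_[(p : ℕ)]) q)
          (n • x) = n • x q := rfl
      rw [h2] at h1
      refine AddSubgroup.closure_mono ?_ h1
      rintro y ⟨y', ⟨g, v, hv, rfl⟩, rfl⟩
      exact ⟨g q, v q, hVqproj v hv, rfl⟩
    have hfin : m • (n • x q) ∈ Vq := by
      have hT : AddSubgroup.closure
          {y : Matrix (Fin s) (Fin r) ℤ_[(q : ℕ)] | ∃ g, ∃ z ∈ Vq, y = g * z} ≤
          Vq.comap (AddMonoidHom.mk' (fun w => m • w) (fun a b => smul_add m a b)) := by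
        rw [AddSubgroup.closure_le]
        rintro y ⟨g, z, hz, rfl⟩
        exact hgen g z hz
      exact hT hWq
    have heq : (n * m) • x q = m • (n • x q) := by
      rw [mul_comm, mul_smul]
    rw [← hVq, heq]
    exact hfin
  -- assemble over all primes
  have hcl : (n * m) • x ∈ closure (V : Set ((p : Nat.Primes) → Matrix (Fin s) (Fin r) ℤ_[(p : ℕ)])) := by
    rw [mem_closure_iff]
    intro U hU hxU
    obtain ⟨I, u, hu, hsub⟩ := isOpen_pi_iff.mp hU _ hxU
    refine ⟨∑ q ∈ I, Pi.single q ((n * m) • x q), hsub fun p hp => ?_,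
      AddSubgroup.sum_mem V fun q _ => hloc q⟩
    have hval : (∑ q ∈ I, Pi.single (M := fun p : Nat.Primes => Matrix (Fin s) (Fin r) ℤ_[(p : ℕ)])
        q ((n * m) • x q)) p = (n * m) • x p := by
      rw [Finset.sum_apply]
      rw [Finset.sum_eq_single_of_mem p hp
        (fun q _ hqp => by simp [Pi.single_eq_of_ne (Ne.symm hqp)])]
      simp
    rw [hval]
    exact (hu p hp).2
  rwa [hVclosed.closure_eq] at hcl
end

section
/- Let G be a profinite group, A a profinite abelian G-module, and suppose the center of G contains an element g acting on A as multiplication by a unit z ∈ Ẑ^× with z − 1 = u·m for some positive integer m and unit u ∈ Ẑ^×. Then m · H^1(G, A) = 0. In particular (Sah's lemma argument), if G ⊆ GL_2(Ẑ) contains all matrices congruent to the identity modulo an even positive integer m_E, and A = (ℚ/ℤ)^2 with the standard action, then m_E · H^1(G, A) = 0. -/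
set_option synthInstance.maxHeartbeats 800000
set_option maxHeartbeats 1600000

/-- The ring `Ẑ` of profinite integers, realized as the subring of `∏ n, ℤ/nℤ`
consisting of the compatible sequences (i.e. `lim_n ℤ/nℤ`). -/
def ZHat : Subring ((n : ℕ+) → ZMod n) where
  carrier := {f | ∀ (m n : ℕ+) (h : (n : ℕ) ∣ (m : ℕ)), ZMod.castHom h (ZMod n) (f m) = f n}
  zero_mem' := by intro m n h; simp
  one_mem' := by intro m n h; exact map_one (ZMod.castHom h (ZMod n))
  add_mem' := by
    intro a b ha hb m n h
    simp only [Pi.add_apply, map_add, ha m n h, hb m n h]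
  neg_mem' := by
    intro a ha m n h
    simp only [Pi.neg_apply, map_neg, ha m n h]
  mul_mem' := by
    intro a b ha hb m n h
    simp only [Pi.mul_apply, map_mul, ha m n h, hb m n h]

/-- The natural action of `Ẑ` on `ℚ/ℤ`: `z` acts on an element `x` of order `n`
through the component of `z` in `ℤ/nℤ`. -/
noncomputable def zhatSmul (z : ZHat) (x : AddCircle (1 : ℚ)) : AddCircle (1 : ℚ) :=
  if h : 0 < addOrderOf x then
    ((z : (n : ℕ+) → ZMod n) ⟨addOrderOf x, h⟩).val • x
  else 0

/-- The standard action of a `2 × 2` matrix over `Ẑ` on `(ℚ/ℤ)²`. -/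
noncomputable def matApply (f : Matrix (Fin 2) (Fin 2) ZHat)
    (x : Fin 2 → AddCircle (1 : ℚ)) : Fin 2 → AddCircle (1 : ℚ) :=
  fun i => ∑ j, zhatSmul (f i j) (x j)

-- ===== auxiliary lemmas =====

lemma addCircle_orderPos (x : AddCircle (1 : ℚ)) : 0 < addOrderOf x := by
  induction x using QuotientAddGroup.induction_on with
  | H q =>
    have : Fact ((0:ℚ) < 1) := ⟨one_pos⟩
    have h := AddCircle.addOrderOf_coe_rat (p := (1:ℚ)) (q := q)
    rw [mul_one, Rat.cast_id] at h
    rw [h]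
    exact q.pos

lemma nsmul_mod' (x : AddCircle (1 : ℚ)) (a : ℕ) (n : ℕ) (h : addOrderOf x ∣ n) :
    (a % n) • x = a • x := by
  conv_rhs => rw [← Nat.div_add_mod a n]
  rw [add_nsmul, mul_nsmul, addOrderOf_dvd_iff_nsmul_eq_zero.mp h, smul_zero, zero_add]

lemma zhatSmul_eq (z : ZHat) (x : AddCircle (1 : ℚ)) (n : ℕ+)
    (h : addOrderOf x ∣ (n : ℕ)) :
    zhatSmul z x = ((z : (n : ℕ+) → ZMod n) n).val • x := by
  have hx := addCircle_orderPos x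
  rw [zhatSmul, dif_pos hx]
  have hz := z.2 n ⟨addOrderOf x, hx⟩ h
  rw [← hz]
  show ((((z : (n : ℕ+) → ZMod n) n).cast : ZMod (⟨addOrderOf x, hx⟩ : ℕ+))).val • x = _
  have : (((z : (n : ℕ+) → ZMod n) n).cast : ZMod (⟨addOrderOf x, hx⟩ : ℕ+)) =
      ((((z : (n : ℕ+) → ZMod n) n).val : ℕ) : ZMod (⟨addOrderOf x, hx⟩ : ℕ+)) := by
    rw [ZMod.natCast_val]
  rw [this, ZMod.val_natCast]
  show ((((z : (n : ℕ+) → ZMod n) n).val : ℕ) % addOrderOf x) • x = _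
  rw [nsmul_mod' x _ _ dvd_rfl]

lemma zhatSmul_add_left (a b : ZHat) (x : AddCircle (1 : ℚ)) :
    zhatSmul (a + b) x = zhatSmul a x + zhatSmul b x := by
  set n : ℕ+ := ⟨addOrderOf x, addCircle_orderPos x⟩ with hn
  have hd : addOrderOf x ∣ (n : ℕ) := dvd_refl _
  rw [zhatSmul_eq a x n hd, zhatSmul_eq b x n hd, zhatSmul_eq (a+b) x n hd]
  have : ((a + b : ZHat) : (n : ℕ+) → ZMod n) n =
      ((a : (n : ℕ+) → ZMod n) n) + ((b : (n : ℕ+) → ZMod n) n) := rfl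
  rw [this, ZMod.val_add, nsmul_mod' x _ _ hd, add_nsmul]

lemma zhatSmul_zero_left (x : AddCircle (1 : ℚ)) : zhatSmul 0 x = 0 := by
  rw [zhatSmul_eq 0 x ⟨addOrderOf x, addCircle_orderPos x⟩ dvd_rfl]
  show (ZMod.val (0 : ZMod _)) • x = 0
  rw [ZMod.val_zero, zero_smul]

lemma zhatSmul_natCast (m : ℕ) (x : AddCircle (1 : ℚ)) :
    zhatSmul (m : ZHat) x = m • x := by
  set n : ℕ+ := ⟨addOrderOf x, addCircle_orderPos x⟩ with hn
  rw [zhatSmul_eq (m : ZHat) x n dvd_rfl]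
  have h1 : (((m : ZHat) : (n : ℕ+) → ZMod n) n) = (m : ZMod n) := by
    push_cast
    rfl
  have hd : addOrderOf x ∣ (n : ℕ) := dvd_rfl
  rw [h1, ZMod.val_natCast, nsmul_mod' x _ _ hd]

lemma zhatSmul_smul_dvd (a : ZHat) (x : AddCircle (1 : ℚ)) (n : ℕ+)
    (h : addOrderOf x ∣ (n : ℕ)) (k : ℕ) :
    zhatSmul a (k • x) = (((a : (n : ℕ+) → ZMod n) n).val * k) • x := by
  have hord : addOrderOf (k • x) ∣ (n : ℕ) := by
    apply addOrderOf_dvd_of_nsmul_eq_zero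
    rw [smul_comm, addOrderOf_dvd_iff_nsmul_eq_zero.mp h, smul_zero]
  rw [zhatSmul_eq a (k • x) n hord, smul_smul]

lemma zhatSmul_mul_left (a b : ZHat) (x : AddCircle (1 : ℚ)) :
    zhatSmul (a * b) x = zhatSmul a (zhatSmul b x) := by
  set n : ℕ+ := ⟨addOrderOf x, addCircle_orderPos x⟩ with hn
  rw [zhatSmul_eq b x n dvd_rfl, zhatSmul_eq (a * b) x n dvd_rfl,
    zhatSmul_smul_dvd a x n dvd_rfl]
  have : ((a * b : ZHat) : (n : ℕ+) → ZMod n) n =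
      ((a : (n : ℕ+) → ZMod n) n) * ((b : (n : ℕ+) → ZMod n) n) := rfl
  have hd : addOrderOf x ∣ (n : ℕ) := dvd_rfl
  rw [this, ZMod.val_mul, nsmul_mod' x _ _ hd]

lemma zhatSmul_add_right (a : ZHat) (x y : AddCircle (1 : ℚ)) :
    zhatSmul a (x + y) = zhatSmul a x + zhatSmul a y := by
  have hx := addCircle_orderPos x
  have hy := addCircle_orderPos y
  set n : ℕ+ := ⟨addOrderOf x * addOrderOf y, Nat.mul_pos hx hy⟩ with hn
  have h1 : addOrderOf x ∣ (n : ℕ) := Dvd.intro _ rfl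
  have h2 : addOrderOf y ∣ (n : ℕ) := Dvd.intro_left _ rfl
  have h3 : addOrderOf (x + y) ∣ (n : ℕ) := by
    apply addOrderOf_dvd_of_nsmul_eq_zero
    rw [smul_add, addOrderOf_dvd_iff_nsmul_eq_zero.mp h1,
      addOrderOf_dvd_iff_nsmul_eq_zero.mp h2, add_zero]
  rw [zhatSmul_eq a x n h1, zhatSmul_eq a y n h2, zhatSmul_eq a (x + y) n h3, smul_add]

lemma zhatSmul_zero_right (a : ZHat) : zhatSmul a 0 = 0 := by
  have := zhatSmul_add_right a 0 0
  rw [add_zero] at this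
  exact add_eq_left.mp this.symm

lemma zhatSmul_neg_right (a : ZHat) (x : AddCircle (1 : ℚ)) :
    zhatSmul a (-x) = - zhatSmul a x := by
  have := zhatSmul_add_right a x (-x)
  rw [add_neg_cancel, zhatSmul_zero_right] at this
  exact (neg_eq_of_add_eq_zero_right this.symm).symm

lemma zhatSmul_sub_right (a : ZHat) (x y : AddCircle (1 : ℚ)) :
    zhatSmul a (x - y) = zhatSmul a x - zhatSmul a y := by
  rw [sub_eq_add_neg, zhatSmul_add_right, zhatSmul_neg_right, sub_eq_add_neg]

lemma zhatSmul_sub_left (a b : ZHat) (x : AddCircle (1 : ℚ)) :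
    zhatSmul (a - b) x = zhatSmul a x - zhatSmul b x := by
  have h := zhatSmul_add_left (a - b) b x
  rw [sub_add_cancel] at h
  rw [eq_sub_iff_add_eq, ← h]

lemma zhatSmul_one (x : AddCircle (1 : ℚ)) : zhatSmul 1 x = x := by
  have := zhatSmul_natCast 1 x
  rw [one_smul, Nat.cast_one] at this
  exact this

-- matApply lemmas

lemma matApply_comm_smul (M : Matrix (Fin 2) (Fin 2) ZHat) (c : ZHat)
    (v : Fin 2 → AddCircle (1 : ℚ)) (i : Fin 2) :
    matApply M (fun j => zhatSmul c (v j)) i = zhatSmul c (matApply M v i) := by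
  unfold matApply
  rw [Fin.sum_univ_two, Fin.sum_univ_two, zhatSmul_add_right,
    ← zhatSmul_mul_left, ← zhatSmul_mul_left, mul_comm (M i 0) c, mul_comm (M i 1) c,
    zhatSmul_mul_left, zhatSmul_mul_left]

lemma matApply_scalar (z : ZHat) (v : Fin 2 → AddCircle (1 : ℚ)) (i : Fin 2) :
    matApply (Matrix.scalar (Fin 2) z) v i = zhatSmul z (v i) := by
  unfold matApply
  rw [Fin.sum_univ_two]
  fin_cases i <;>
    simp [Matrix.scalar_apply, Matrix.diagonal_apply, zhatSmul_zero_left]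

-- ===== the k-part decomposition of n =====

/-- The `k`-part of `n`: the largest divisor of `n` all of whose primes divide `k`. -/
def kPart (k n : ℕ) : ℕ := Nat.gcd n (k ^ n)

lemma kPart_dvd (k n : ℕ) : kPart k n ∣ n := Nat.gcd_dvd_left _ _

lemma kPart_pos (k : ℕ) {n : ℕ} (hn : n ≠ 0) : 0 < kPart k n :=
  Nat.gcd_pos_of_pos_left _ (Nat.pos_of_ne_zero hn)

lemma kPart_mul (k : ℕ) {n : ℕ} (hn : n ≠ 0) : kPart k n * (n / kPart k n) = n :=
  Nat.mul_div_cancel' (kPart_dvd k n)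

/-- The cofactor `n / kPart k n` is coprime to `k`. -/
lemma coprime_cofactor (k : ℕ) (hk : k ≠ 0) {n : ℕ} (hn : n ≠ 0) :
    Nat.Coprime (n / kPart k n) k := by
  by_contra hco
  obtain ⟨p, hp, hpa, hpk⟩ := Nat.Prime.not_coprime_iff_dvd.mp hco
  set d := kPart k n with hd
  have hd0 : d ≠ 0 := (kPart_pos k hn).ne'
  have hkn0 : k ^ n ≠ 0 := pow_ne_zero _ hk
  have hpd_n : p * d ∣ n := by
    have := Nat.mul_dvd_mul_left d (mul_dvd_mul hpa (dvd_refl 1))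
    -- simpler:
    obtain ⟨c, hc⟩ := hpa
    have : n = d * (n / d) := (kPart_mul k hn).symm
    rw [this, hc]
    exact ⟨c, by ring⟩
  have hfact : d.factorization p < n := by
    have h1 : p ^ (d.factorization p) ∣ d := Nat.ordProj_dvd d p
    have h2 : p ^ (d.factorization p) ≤ n :=
      Nat.le_of_dvd (Nat.pos_of_ne_zero hn) (h1.trans (kPart_dvd k n))
    have h3 : n < 2 ^ n := Nat.lt_two_pow_self
    have h4 : (2:ℕ) ^ (d.factorization p) ≤ p ^ (d.factorization p) :=
      Nat.pow_le_pow_left hp.two_le _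
    by_contra hcon
    push_neg at hcon
    have : (2:ℕ) ^ n ≤ 2 ^ (d.factorization p) := Nat.pow_le_pow_right (by norm_num) hcon
    omega
  have hpd_kn : p * d ∣ k ^ n := by
    rw [← Nat.factorization_le_iff_dvd (Nat.mul_ne_zero hp.pos.ne' hd0) hkn0]
    intro q
    rw [Nat.factorization_mul hp.ne_zero hd0, Finsupp.add_apply]
    rcases eq_or_ne q p with rfl | hq
    · have hdq : d.factorization q ≤ (k ^ n).factorization q := by
        rw [hd, kPart, Nat.factorization_gcd hn hkn0]
        exact inf_le_right
      have hk1 : 1 ≤ k.factorization q := hp.factorization_pos_of_dvd hk hpk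
      rw [hp.factorization, Finsupp.single_apply, if_pos rfl, Nat.factorization_pow,
        Finsupp.smul_apply, smul_eq_mul]
      nlinarith
    · rw [hp.factorization, Finsupp.single_apply, if_neg (fun h => hq h.symm)]
      have : d.factorization q ≤ (k ^ n).factorization q := by
        rw [hd, kPart, Nat.factorization_gcd hn hkn0]
        exact inf_le_right
      omega
  have : p * d ∣ d := Nat.dvd_gcd hpd_n hpd_kn
  have hle := Nat.le_of_dvd (Nat.pos_of_ne_zero hd0) this
  nlinarith [hp.two_le, Nat.pos_of_ne_zero hd0]

lemma coprime_parts (k : ℕ) (hk : k ≠ 0) {n : ℕ} (hn : n ≠ 0) :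
    Nat.Coprime (kPart k n) (n / kPart k n) := by
  have h1 : Nat.Coprime (n / kPart k n) (k ^ n) :=
    (coprime_cofactor k hk hn).pow_right _
  exact ((h1.coprime_dvd_right (Nat.gcd_dvd_right n (k ^ n))).symm)

lemma kPart_dvd_kPart (k : ℕ) {n m : ℕ} (hnm : n ∣ m) (hm : m ≠ 0) :
    kPart k n ∣ kPart k m := by
  apply Nat.dvd_gcd ((kPart_dvd k n).trans hnm)
  exact (Nat.gcd_dvd_right n (k ^ n)).trans
    (pow_dvd_pow k (Nat.le_of_dvd (Nat.pos_of_ne_zero hm) hnm))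

lemma cofactor_dvd_cofactor (k : ℕ) (hk : k ≠ 0) {n m : ℕ} (hnm : n ∣ m)
    (hn : n ≠ 0) (hm : m ≠ 0) :
    n / kPart k n ∣ m / kPart k m := by
  have h1 : n / kPart k n ∣ m := (Nat.div_dvd_of_dvd (kPart_dvd k n)).trans hnm
  have h2 : Nat.Coprime (n / kPart k n) (kPart k m) :=
    ((coprime_cofactor k hk hn).pow_right m).coprime_dvd_right
      (Nat.gcd_dvd_right m (k ^ m))
  apply h2.dvd_of_dvd_mul_left
  rwa [kPart_mul k hm]

-- ===== CRT uniqueness in ZMod =====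

lemma zmod_ext_of_crt {n d c : ℕ} (hn : n ≠ 0) (hmul : d * c = n)
    (hco : Nat.Coprime d c) (hd : d ∣ n) (hc : c ∣ n) (x y : ZMod n)
    (h1 : ZMod.castHom hd (ZMod d) x = ZMod.castHom hd (ZMod d) y)
    (h2 : ZMod.castHom hc (ZMod c) x = ZMod.castHom hc (ZMod c) y) : x = y := by
  haveI : NeZero n := ⟨hn⟩
  have hw1 : ZMod.castHom hd (ZMod d) (x - y) = 0 := by rw [map_sub, h1, sub_self]
  have hw2 : ZMod.castHom hc (ZMod c) (x - y) = 0 := by rw [map_sub, h2, sub_self]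
  have e1 : (((x - y).val : ℕ) : ZMod d) = 0 := by
    rw [ZMod.natCast_val, ← ZMod.castHom_apply (h := hd), hw1]
  have e2 : (((x - y).val : ℕ) : ZMod c) = 0 := by
    rw [ZMod.natCast_val, ← ZMod.castHom_apply (h := hc), hw2]
  have d1 : d ∣ (x - y).val := (ZMod.natCast_eq_zero_iff _ _).mp e1
  have d2 : c ∣ (x - y).val := (ZMod.natCast_eq_zero_iff _ _).mp e2
  have dn : n ∣ (x - y).val := by
    have := Nat.Coprime.mul_dvd_of_dvd_of_dvd hco d1 d2
    rwa [hmul] at this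
  have hv : (x - y).val = 0 := Nat.eq_zero_of_dvd_of_lt dn (ZMod.val_lt _)
  have : x - y = 0 := (ZMod.val_eq_zero _).mp hv
  exact sub_eq_zero.mp this

-- coordinates of ZHat operations
lemma ZHat.natCast_coord (m : ℕ) (n : ℕ+) :
    (((m : ZHat) : (n : ℕ+) → ZMod n)) n = (m : ZMod n) := by
  push_cast
  rfl

lemma natCast_pred_zmod {d e : ℕ} (h1 : 1 ≤ e) (hde : d ∣ e) :
    ((e - 1 : ℕ) : ZMod d) = -1 := by
  rw [Nat.cast_sub h1, Nat.cast_one, (ZMod.natCast_eq_zero_iff e d).mpr hde,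
    zero_sub]

-- a compatible family of units is a unit
lemma zhat_isUnit_of (w : ZHat) (h : ∀ n : ℕ+, IsUnit (w.1 n)) :
    IsUnit w := by
  have hinv : ∀ n : ℕ+, w.1 n * (((h n).unit⁻¹ : (ZMod n)ˣ) : ZMod n) = 1 := by
    intro n
    have := Units.mul_inv (h n).unit
    rwa [(h n).unit_spec] at this
  have hmem : (fun (n : ℕ+) => (((h n).unit⁻¹ : (ZMod n)ˣ) : ZMod n)) ∈ ZHat := by
    intro m n hd
    simp only
    have h1 : w.1 n * ZMod.castHom hd (ZMod n) (((h m).unit⁻¹ : (ZMod m)ˣ) : ZMod m)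
        = 1 := by
      rw [← w.2 m n hd, ← map_mul, hinv m, map_one]
    have h2 := hinv n
    calc ZMod.castHom hd (ZMod n) (((h m).unit⁻¹ : (ZMod m)ˣ) : ZMod m)
        = (ZMod.castHom hd (ZMod n) (((h m).unit⁻¹ : (ZMod m)ˣ) : ZMod m)) *
            (w.1 n * (((h n).unit⁻¹ : (ZMod n)ˣ) : ZMod n)) := by rw [h2, mul_one]
      _ = (w.1 n * ZMod.castHom hd (ZMod n) (((h m).unit⁻¹ : (ZMod m)ˣ) : ZMod m)) *
            (((h n).unit⁻¹ : (ZMod n)ˣ) : ZMod n) := by ring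
      _ = (((h n).unit⁻¹ : (ZMod n)ˣ) : ZMod n) := by rw [h1, one_mul]
  refine IsUnit.of_mul_eq_one (a := w) ⟨_, hmem⟩ ?_
  apply Subtype.ext
  funext n
  exact hinv n

-- ===== the special elements u and z =====

variable (mE : ℕ)

/-- The component of the unit `u` at level `n`. -/
noncomputable def uFun (n : ℕ+) : ZMod n :=
  ((Nat.chineseRemainder
      (coprime_parts (mE + 1) (Nat.succ_ne_zero mE) (n.pos.ne' : (n : ℕ) ≠ 0))
      (kPart (mE + 1) (n : ℕ) - 1) 1 : ℕ) : ZMod n)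

lemma uFun_cast_d (n : ℕ+) {e : ℕ} (hed : e ∣ kPart (mE + 1) (n : ℕ))
    (hen : e ∣ (n : ℕ)) :
    ZMod.castHom hen (ZMod e) (uFun mE n) = -1 := by
  rw [uFun, map_natCast]
  have hmod := (Nat.chineseRemainder
      (coprime_parts (mE + 1) (Nat.succ_ne_zero mE) (n.pos.ne' : (n : ℕ) ≠ 0))
      (kPart (mE + 1) (n : ℕ) - 1) 1).2.1
  have hmod' := hmod.of_dvd hed
  rw [(ZMod.natCast_eq_natCast_iff _ _ _).mpr hmod']
  exact natCast_pred_zmod (kPart_pos _ n.pos.ne') hed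

lemma uFun_cast_c (n : ℕ+) {e : ℕ} (hec : e ∣ (n : ℕ) / kPart (mE + 1) (n : ℕ))
    (hen : e ∣ (n : ℕ)) :
    ZMod.castHom hen (ZMod e) (uFun mE n) = 1 := by
  rw [uFun, map_natCast]
  have hmod := (Nat.chineseRemainder
      (coprime_parts (mE + 1) (Nat.succ_ne_zero mE) (n.pos.ne' : (n : ℕ) ≠ 0))
      (kPart (mE + 1) (n : ℕ) - 1) 1).2.2
  have hmod' := hmod.of_dvd hec
  rw [(ZMod.natCast_eq_natCast_iff _ _ _).mpr hmod']
  exact Nat.cast_one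

lemma uFun_mem : (uFun mE) ∈ ZHat := by
  intro m n hnm
  set k := mE + 1 with hk
  have hn0 : (n : ℕ) ≠ 0 := n.pos.ne'
  have hm0 : (m : ℕ) ≠ 0 := m.pos.ne'
  have hk0 : k ≠ 0 := Nat.succ_ne_zero mE
  have hdn : kPart k (n : ℕ) ∣ (n : ℕ) := kPart_dvd _ _
  have hcn : (n : ℕ) / kPart k (n : ℕ) ∣ (n : ℕ) := Nat.div_dvd_of_dvd hdn
  apply zmod_ext_of_crt hn0 (kPart_mul k hn0) (coprime_parts k hk0 hn0) hdn hcn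
  · have hcomp : (ZMod.castHom hdn (ZMod (kPart k (n:ℕ)))).comp
        (ZMod.castHom hnm (ZMod (n:ℕ))) = ZMod.castHom (hdn.trans hnm) _ :=
      ZMod.castHom_comp hdn hnm
    rw [show ZMod.castHom hdn (ZMod (kPart k (n:ℕ)))
          (ZMod.castHom hnm (ZMod (n : ℕ)) (uFun mE m)) =
        ZMod.castHom (hdn.trans hnm) (ZMod (kPart k (n:ℕ))) (uFun mE m) from
      congrFun (congrArg DFunLike.coe hcomp) (uFun mE m)]
    rw [uFun_cast_d mE m (kPart_dvd_kPart k hnm hm0) (hdn.trans hnm)]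
    rw [uFun_cast_d mE n dvd_rfl hdn]
  · have hccm : (n : ℕ) / kPart k (n : ℕ) ∣ (m : ℕ) / kPart k (m : ℕ) :=
      cofactor_dvd_cofactor k hk0 hnm hn0 hm0
    have hcomp : (ZMod.castHom hcn (ZMod ((n:ℕ) / kPart k (n:ℕ)))).comp
        (ZMod.castHom hnm (ZMod (n:ℕ))) = ZMod.castHom (hcn.trans hnm) _ :=
      ZMod.castHom_comp hcn hnm
    rw [show ZMod.castHom hcn _ (ZMod.castHom hnm (ZMod (n : ℕ)) (uFun mE m)) =
        ZMod.castHom (hcn.trans hnm) (ZMod ((n:ℕ) / kPart k (n:ℕ))) (uFun mE m) from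
      congrFun (congrArg DFunLike.coe hcomp) (uFun mE m)]
    rw [uFun_cast_c mE m hccm (hcn.trans hnm)]
    rw [uFun_cast_c mE n dvd_rfl hcn]

/-- The unit `u ∈ Ẑ` with `u ≡ -1` at primes dividing `mE+1` and `u ≡ 1` elsewhere. -/
noncomputable def uZ : ZHat := ⟨uFun mE, uFun_mem mE⟩

lemma uZ_sq : uZ mE * uZ mE = 1 := by
  apply Subtype.ext
  funext n
  show uFun mE n * uFun mE n = 1
  have hn0 : (n : ℕ) ≠ 0 := n.pos.ne'
  have hk0 : mE + 1 ≠ 0 := Nat.succ_ne_zero mE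
  have hdn : kPart (mE+1) (n : ℕ) ∣ (n : ℕ) := kPart_dvd _ _
  have hcn : (n : ℕ) / kPart (mE+1) (n : ℕ) ∣ (n : ℕ) := Nat.div_dvd_of_dvd hdn
  apply zmod_ext_of_crt hn0 (kPart_mul (mE+1) hn0) (coprime_parts (mE+1) hk0 hn0)
    hdn hcn
  · rw [map_mul, map_one, uFun_cast_d mE n dvd_rfl hdn, neg_one_mul, neg_neg]
  · rw [map_mul, map_one, uFun_cast_c mE n dvd_rfl hcn, one_mul]

/-- The element `z = 1 + mE · u`. -/
noncomputable def zZ : ZHat := 1 + (mE : ZHat) * uZ mE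

lemma zZ_sub_one : zZ mE - 1 = (mE : ZHat) * uZ mE := by
  rw [zZ]; ring

lemma zZ_coord (n : ℕ+) : (zZ mE).1 n = 1 + (mE : ZMod n) * uFun mE n := by
  show (1 : ZHat).1 n + ((mE : ZHat).1 n * (uZ mE).1 n) = _
  rw [ZHat.natCast_coord]
  rfl

lemma coprime_pred_succ (h0 : 0 < mE) (h2 : 2 ∣ mE) : Nat.Coprime (mE - 1) (mE + 1) := by
  set g := Nat.gcd (mE - 1) (mE + 1) with hg
  have g1 : g ∣ mE - 1 := Nat.gcd_dvd_left _ _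
  have g2 : g ∣ mE + 1 := Nat.gcd_dvd_right _ _
  have g3 : g ∣ 2 := by
    have := Nat.dvd_sub g2 g1
    rwa [show mE + 1 - (mE - 1) = 2 by omega] at this
  rcases (Nat.dvd_prime Nat.prime_two).mp g3 with h | h
  · exact h
  · exfalso
    rw [h] at g1
    omega

lemma zZ_isUnit (h0 : 0 < mE) (h2 : 2 ∣ mE) : IsUnit (zZ mE) := by
  apply zhat_isUnit_of
  intro n
  have hn0 : (n : ℕ) ≠ 0 := n.pos.ne'
  have hk0 : mE + 1 ≠ 0 := Nat.succ_ne_zero mE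
  set d := kPart (mE+1) (n : ℕ) with hdd
  set c := (n : ℕ) / kPart (mE+1) (n : ℕ) with hcc
  have hdn : d ∣ (n : ℕ) := kPart_dvd _ _
  have hcn : c ∣ (n : ℕ) := Nat.div_dvd_of_dvd hdn
  have hco := coprime_parts (mE+1) hk0 hn0
  have hAval : ZMod.castHom hdn (ZMod d) ((zZ mE).1 n) = -((mE - 1 : ℕ) : ZMod d) := by
    rw [zZ_coord, map_add, map_mul, map_one, map_natCast,
      uFun_cast_d mE n dvd_rfl hdn, Nat.cast_sub h0, Nat.cast_one]
    ring
  have hBval : ZMod.castHom hcn (ZMod c) ((zZ mE).1 n) = ((mE + 1 : ℕ) : ZMod c) := by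
    rw [zZ_coord, map_add, map_mul, map_one, map_natCast,
      uFun_cast_c mE n dvd_rfl hcn, Nat.cast_add, Nat.cast_one]
    ring
  have hA : IsUnit (ZMod.castHom hdn (ZMod d) ((zZ mE).1 n)) := by
    rw [hAval]
    apply IsUnit.neg
    rw [ZMod.isUnit_iff_coprime]
    exact ((coprime_pred_succ mE h0 h2).pow_right (n : ℕ)).coprime_dvd_right
      (Nat.gcd_dvd_right _ _)
  have hB : IsUnit (ZMod.castHom hcn (ZMod c) ((zZ mE).1 n)) := by
    rw [hBval, ZMod.isUnit_iff_coprime]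
    exact (coprime_cofactor (mE+1) hk0 hn0).symm
  -- build the inverse via CRT
  set y : ZMod n := ((Nat.chineseRemainder hco
      ((hA.unit⁻¹ : (ZMod d)ˣ) : ZMod d).val
      ((hB.unit⁻¹ : (ZMod c)ˣ) : ZMod c).val : ℕ) : ZMod n) with hy
  have hyd : ZMod.castHom hdn (ZMod d) y = ((hA.unit⁻¹ : (ZMod d)ˣ) : ZMod d) := by
    rw [hy, map_natCast,
      (ZMod.natCast_eq_natCast_iff _ _ _).mpr ((Nat.chineseRemainder hco _ _).2.1)]
    haveI : NeZero d := ⟨(kPart_pos (mE+1) hn0).ne'⟩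
    rw [ZMod.natCast_val, ZMod.cast_id]
  have hyc : ZMod.castHom hcn (ZMod c) y = ((hB.unit⁻¹ : (ZMod c)ˣ) : ZMod c) := by
    rw [hy, map_natCast,
      (ZMod.natCast_eq_natCast_iff _ _ _).mpr ((Nat.chineseRemainder hco _ _).2.2)]
    haveI : NeZero c := ⟨by
      have := kPart_mul (mE+1) hn0
      intro hc0
      rw [← hcc, hc0, mul_zero] at this
      exact hn0 this.symm⟩
    rw [ZMod.natCast_val, ZMod.cast_id]
  apply IsUnit.of_mul_eq_one y
  apply zmod_ext_of_crt hn0 (kPart_mul (mE+1) hn0) hco hdn hcn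
  · rw [map_mul, map_one, hyd]
    exact hA.mul_val_inv
  · rw [map_mul, map_one, hyc]
    exact hB.mul_val_inv
/-- (Sah's lemma argument.) If a profinite group `G` acts
continuously on a profinite abelian `Ẑ`-module `A` and the center of `G` contains an
element `g` acting as multiplication by a unit `z ∈ Ẑ^×` with `z − 1 = u·m` for a
positive integer `m` and a unit `u ∈ Ẑ^×`, then `m · H¹(G, A) = 0` (every continuous
`1`-cocycle, multiplied by `m`, is a coboundary). In particular, if `G ⊆ GL₂(Ẑ)`
contains all matrices congruent to the identity modulo an even positive integer `m_E`,
and `A = (ℚ/ℤ)²` with the standard action, then `m_E · H¹(G, A) = 0`. -/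
theorem stmt19 :
    (∀ (G A : Type) [Group G] [TopologicalSpace G] [IsTopologicalGroup G]
      [CompactSpace G] [TotallyDisconnectedSpace G]
      [AddCommGroup A] [TopologicalSpace A] [IsTopologicalAddGroup A]
      [CompactSpace A] [TotallyDisconnectedSpace A] [Module ZHat A]
      [DistribMulAction G A] [ContinuousSMul G A],
      -- the `G`-action commutes with the `Ẑ`-module structure
      (∀ (x : G) (z : ZHat) (a : A), x • (z • a) = z • (x • a)) →
      ∀ m : ℕ, 0 < m →
      -- a central element acting as multiplication by a unit `z` with `z - 1 = u·m`
      (∃ g ∈ Subgroup.center G, ∃ z : (ZHat)ˣ,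
        (∀ a : A, g • a = (z : ZHat) • a) ∧
        ∃ u : (ZHat)ˣ, (z : ZHat) - 1 = (u : ZHat) * (m : ZHat)) →
      -- then `m` kills continuous `H¹(G, A)`
      ∀ f : G → A, Continuous f → (∀ x y : G, f (x * y) = f x + x • f y) →
        ∃ a : A, ∀ x : G, m • f x = x • a - a) ∧
    (∀ mE : ℕ, 0 < mE → 2 ∣ mE →
      ∀ Gs : Subgroup (Matrix (Fin 2) (Fin 2) ZHat)ˣ,
      -- `Gs` contains every matrix congruent to the identity modulo `mE`
      (∀ u : (Matrix (Fin 2) (Fin 2) ZHat)ˣ,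
        (∀ i j, ∃ z : ZHat,
          (u : Matrix (Fin 2) (Fin 2) ZHat) i j - (1 : Matrix (Fin 2) (Fin 2) ZHat) i j
            = (mE : ZHat) * z) → u ∈ Gs) →
      ∀ f : ↥Gs → (Fin 2 → AddCircle (1 : ℚ)),
        (∀ x y : ↥Gs, f (x * y) =
          f x + matApply ((x : (Matrix (Fin 2) (Fin 2) ZHat)ˣ) :
            Matrix (Fin 2) (Fin 2) ZHat) (f y)) →
        ∃ a : Fin 2 → AddCircle (1 : ℚ), ∀ x : ↥Gs,
          mE • f x = matApply ((x : (Matrix (Fin 2) (Fin 2) ZHat)ˣ) :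
            Matrix (Fin 2) (Fin 2) ZHat) a - a) := by
  constructor
  · intro G A _ _ _ _ _ _ _ _ _ _ _ _ _ hcomm m hm hex f _ hf
    obtain ⟨g, hgc, z, hz, u, hu⟩ := hex
    refine ⟨((u⁻¹ : ZHatˣ) : ZHat) • f g, fun x => ?_⟩
    have hcen : g * x = x * g := (Subgroup.mem_center_iff.mp hgc x).symm
    have h1 : f g + g • f x = f x + x • f g := by
      rw [← hf, hcen, hf]
    have h2 : (z : ZHat) • f x - f x = x • f g - f g := by
      rw [← hz, sub_eq_sub_iff_add_eq_add, add_comm (g • f x), add_comm (x • f g)]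
      exact h1
    have h3 : ((u : ZHat) * (m : ZHat)) • f x = x • f g - f g := by
      rw [← hu, sub_smul, one_smul]; exact h2
    rw [hcomm, ← smul_sub, ← h3, smul_smul, ← mul_assoc, Units.inv_mul, one_mul,
      Nat.cast_smul_eq_nsmul]
  · intro mE hpos h2 Gs hGs f hf
    set z : ZHat := zZ mE with hzdef
    have hzu : IsUnit z := zZ_isUnit mE hpos h2
    set gMat : (Matrix (Fin 2) (Fin 2) ZHat)ˣ :=
      Units.map (Matrix.scalar (Fin 2)).toMonoidHom hzu.unit with hgM
    have hgMval : (gMat : Matrix (Fin 2) (Fin 2) ZHat) = Matrix.scalar (Fin 2) z := by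
      rw [hgM, Units.coe_map]
      show (Matrix.scalar (Fin 2)) (hzu.unit : ZHat) = _
      rw [hzu.unit_spec]
    have hmem : gMat ∈ Gs := by
      apply hGs
      intro i j
      rcases eq_or_ne i j with rfl | hij
      · refine ⟨uZ mE, ?_⟩
        rw [hgMval, Matrix.scalar_apply, Matrix.diagonal_apply_eq, Matrix.one_apply_eq,
          ← zZ_sub_one]
      · refine ⟨0, ?_⟩
        rw [hgMval, Matrix.scalar_apply, Matrix.diagonal_apply_ne _ hij,
          Matrix.one_apply_ne hij, mul_zero, sub_zero]
    set gEl : ↥Gs := ⟨gMat, hmem⟩ with hgEl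
    have hcen : ∀ x : ↥Gs, gEl * x = x * gEl := by
      intro x
      apply Subtype.ext
      apply Units.ext
      show (gMat : Matrix (Fin 2) (Fin 2) ZHat) * ((x : (Matrix (Fin 2) (Fin 2) ZHat)ˣ) :
        Matrix (Fin 2) (Fin 2) ZHat) = _ * _
      rw [hgMval]
      exact (Matrix.scalar_commute z (fun r' => Commute.all z r') _).eq
    refine ⟨fun i => zhatSmul (uZ mE) (f gEl i), fun x => ?_⟩
    have key : ∀ i, zhatSmul z (f x i) - f x i =
        matApply ((x : (Matrix (Fin 2) (Fin 2) ZHat)ˣ) : Matrix (Fin 2) (Fin 2) ZHat)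
          (f gEl) i - f gEl i := by
      intro i
      have e1 := hf gEl x
      have e2 := hf x gEl
      rw [← hcen x, e1] at e2
      have e3 := congrFun e2 i
      rw [Pi.add_apply, Pi.add_apply] at e3
      have e4 : matApply ((gEl : (Matrix (Fin 2) (Fin 2) ZHat)ˣ) :
          Matrix (Fin 2) (Fin 2) ZHat) (f x) i = zhatSmul z (f x i) := by
        show matApply (gMat : Matrix (Fin 2) (Fin 2) ZHat) (f x) i = _
        rw [hgMval, matApply_scalar]
      rw [e4] at e3
      rw [sub_eq_sub_iff_add_eq_add, add_comm (zhatSmul z (f x i)),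
        add_comm (matApply _ (f gEl) i)]
      exact e3
    funext i
    rw [Pi.smul_apply, Pi.sub_apply]
    have c1 : matApply ((x : (Matrix (Fin 2) (Fin 2) ZHat)ˣ) : Matrix (Fin 2) (Fin 2) ZHat)
        (fun j => zhatSmul (uZ mE) (f gEl j)) i =
        zhatSmul (uZ mE) (matApply ((x : (Matrix (Fin 2) (Fin 2) ZHat)ˣ) :
          Matrix (Fin 2) (Fin 2) ZHat) (f gEl) i) := matApply_comm_smul _ _ _ _
    rw [c1, ← zhatSmul_sub_right, ← key i]
    have c2 : zhatSmul z (f x i) - f x i = zhatSmul (z - 1) (f x i) := by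
      rw [zhatSmul_sub_left, zhatSmul_one]
    rw [c2, ← zhatSmul_mul_left, hzdef, zZ_sub_one,
      show uZ mE * ((mE : ZHat) * uZ mE) = (uZ mE * uZ mE) * (mE : ZHat) by ring,
      uZ_sq, one_mul, zhatSmul_natCast]
end
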